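/- arXiv:2506.17235 — 5 statements merged into one kernel-verified Lean document; each statement's English description precedes it below -/
import Mathlib

section
/- For any odd prime p, the sum over m from 0 to p-1 of the fourth power of the absolute value of the Kloosterman sum ∑_{a=1}^{p-1} e((a + m·ā)/p) equals 2p³ − 3p² − 3p, where ā denotes the multiplicative inverse of a modulo p and e(y) = e^{2πiy}. -/
open Finset Complex Real

namespace Salie

variable {p : ℕ} [hpF : Fact p.Prime]

noncomputable def ζ (p : ℕ) : ℂ := Complex.exp (2 * Real.pi * Complex.I / p)

noncomputable def ψ (x : ZMod p) : ℂ := ζ p ^ x.val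

lemma zeta_pow_p : ζ p ^ p = 1 := by
  have h0 : (p : ℂ) ≠ 0 := Nat.cast_ne_zero.mpr hpF.out.ne_zero
  rw [ζ, ← Complex.exp_nat_mul]
  rw [show (p : ℂ) * (2 * Real.pi * Complex.I / p) = 2 * Real.pi * Complex.I by field_simp]
  exact Complex.exp_two_pi_mul_I

lemma zeta_pow_mod (n : ℕ) : ζ p ^ (n % p) = ζ p ^ n := by
  conv_rhs => rw [← Nat.div_add_mod n p]
  rw [pow_add, pow_mul, zeta_pow_p, one_pow, one_mul]

lemma psi_natCast (n : ℕ) : ψ (n : ZMod p) = ζ p ^ n := by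
  rw [ψ, ZMod.val_natCast, zeta_pow_mod]

lemma psi_add (x y : ZMod p) : ψ (x + y) = ψ x * ψ y := by
  rw [ψ, ZMod.val_add, zeta_pow_mod, pow_add, ψ, ψ]

lemma psi_zero : ψ (0 : ZMod p) = 1 := by
  rw [ψ, ZMod.val_zero, pow_zero]

lemma psi_mul_neg (x : ZMod p) : ψ x * ψ (-x) = 1 := by
  rw [← psi_add, add_neg_cancel, psi_zero]

lemma psi_neg (x : ZMod p) : ψ (-x) = (ψ x)⁻¹ :=
  eq_inv_of_mul_eq_one_left (by rw [mul_comm]; exact psi_mul_neg x)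

lemma conj_zeta : (starRingEnd ℂ) (ζ p) = (ζ p)⁻¹ := by
  apply eq_inv_of_mul_eq_one_right
  rw [ζ, ← Complex.exp_conj, ← Complex.exp_add]
  rw [show (starRingEnd ℂ) (2 * Real.pi * Complex.I / p) = -(2 * Real.pi * Complex.I / p) by
    simp [map_div₀, Complex.conj_I, Complex.conj_ofReal, map_ofNat]
    ring]
  simp

lemma conj_psi (x : ZMod p) : (starRingEnd ℂ) (ψ x) = ψ (-x) := by
  rw [ψ, map_pow, conj_zeta, inv_pow, ← ψ, psi_neg]

lemma zeta_ne_one : ζ p ≠ 1 :=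
  (Complex.isPrimitiveRoot_exp p hpF.out.ne_zero).ne_one hpF.out.one_lt

lemma sum_psi_all : ∑ x : ZMod p, ψ x = 0 := by
  have : ∑ x : ZMod p, ψ x = ∑ k ∈ range p, ζ p ^ k := by
    apply Finset.sum_nbij' (fun x : ZMod p => x.val) (fun k => (k : ZMod p))
    · intro a _; exact Finset.mem_range.mpr (ZMod.val_lt a)
    · intro a _; exact Finset.mem_univ _
    · intro a _; simp [ZMod.natCast_val, ZMod.cast_id]
    · intro k hk; exact ZMod.val_natCast_of_lt (Finset.mem_range.mp hk)
    · intro a _; rw [ψ]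
  rw [this]
  exact (Complex.isPrimitiveRoot_exp p hpF.out.ne_zero).geom_sum_eq_zero hpF.out.one_lt

lemma orth (t : ZMod p) : ∑ m : ZMod p, ψ (m * t) = if t = 0 then (p : ℂ) else 0 := by
  split_ifs with h
  · subst h
    simp only [mul_zero, psi_zero, Finset.sum_const, Finset.card_univ, ZMod.card,
      nsmul_eq_mul, mul_one]
  · rw [← sum_psi_all (p := p)]
    exact Fintype.sum_bijective (fun m => m * t) (Equiv.mulRight₀ t h).bijective _ _
      (fun m => rfl)

lemma sum_fiber_mul {ι β : Type*} [Fintype β] [DecidableEq β] (A : Finset ι) (F : ι → β)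
    (G H : ι → ℂ) :
    ∑ s : β, (∑ x ∈ A, if F x = s then G x else 0) * (∑ y ∈ A, if F y = s then H y else 0)
      = ∑ x ∈ A, ∑ y ∈ A, if F x = F y then G x * H y else 0 := by
  simp_rw [Finset.sum_mul_sum]
  rw [Finset.sum_comm]
  refine Finset.sum_congr rfl fun x _ => ?_
  rw [Finset.sum_comm]
  refine Finset.sum_congr rfl fun y _ => ?_
  have h1 : ∀ s : β, (if F x = s then G x else 0) * (if F y = s then H y else 0)
      = if F x = s then (if F y = s then G x * H y else 0) else 0 := by
    intro s; split_ifs <;> simp_all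
  rw [Finset.sum_congr rfl fun s _ => h1 s, Finset.sum_ite_eq]
  simp only [Finset.mem_univ, if_true]
  simp [eq_comm]

noncomputable def K (m : ZMod p) : ℂ := ∑ a ∈ ({0}ᶜ : Finset (ZMod p)), ψ (a + m * a⁻¹)

noncomputable def g (s : ZMod p) : ℂ :=
  ∑ x ∈ (({0}ᶜ : Finset (ZMod p)) ×ˢ ({0}ᶜ : Finset (ZMod p))),
    if x.1 + x.2 = s then ψ (x.1⁻¹ + x.2⁻¹) else 0

lemma expand (m : ZMod p) :
    (K m * (starRingEnd ℂ) (K m)) ^ 2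
      = ∑ x ∈ (({0}ᶜ : Finset (ZMod p)) ×ˢ ({0}ᶜ : Finset (ZMod p))),
          ∑ y ∈ (({0}ᶜ : Finset (ZMod p)) ×ˢ ({0}ᶜ : Finset (ZMod p))),
          ψ (x.1 + x.2 - (y.1 + y.2)) * ψ (m * (x.1⁻¹ + x.2⁻¹ - (y.1⁻¹ + y.2⁻¹))) := by
  have hK2 : K m * K m
      = ∑ x ∈ (({0}ᶜ : Finset (ZMod p)) ×ˢ ({0}ᶜ : Finset (ZMod p))),
          ψ ((x.1 + x.2) + m * (x.1⁻¹ + x.2⁻¹)) := by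
    rw [K, Finset.sum_mul_sum, ← Finset.sum_product']
    refine Finset.sum_congr rfl fun x _ => ?_
    rw [← psi_add]; congr 1; ring
  have hKc : (starRingEnd ℂ) (K m) = ∑ c ∈ ({0}ᶜ : Finset (ZMod p)), ψ (-(c + m * c⁻¹)) := by
    rw [K, map_sum]
    exact Finset.sum_congr rfl fun c _ => conj_psi _
  have hKc2 : (starRingEnd ℂ) (K m) * (starRingEnd ℂ) (K m)
      = ∑ y ∈ (({0}ᶜ : Finset (ZMod p)) ×ˢ ({0}ᶜ : Finset (ZMod p))),
          ψ (-((y.1 + y.2) + m * (y.1⁻¹ + y.2⁻¹))) := by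
    rw [hKc, Finset.sum_mul_sum, ← Finset.sum_product']
    refine Finset.sum_congr rfl fun y _ => ?_
    rw [← psi_add]; congr 1; ring
  have : (K m * (starRingEnd ℂ) (K m)) ^ 2
      = (K m * K m) * ((starRingEnd ℂ) (K m) * (starRingEnd ℂ) (K m)) := by ring
  rw [this, hK2, hKc2, Finset.sum_mul_sum]
  refine Finset.sum_congr rfl fun x _ => Finset.sum_congr rfl fun y _ => ?_
  rw [← psi_add, ← psi_add]; congr 1; ring

lemma S_eq :
    ∑ m : ZMod p, (K m * (starRingEnd ℂ) (K m)) ^ 2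
      = (p : ℂ) * ∑ x ∈ (({0}ᶜ : Finset (ZMod p)) ×ˢ ({0}ᶜ : Finset (ZMod p))),
          ∑ y ∈ (({0}ᶜ : Finset (ZMod p)) ×ˢ ({0}ᶜ : Finset (ZMod p))),
          (if x.1⁻¹ + x.2⁻¹ - (y.1⁻¹ + y.2⁻¹) = 0 then ψ (x.1 + x.2 - (y.1 + y.2)) else 0) := by
  simp_rw [expand]
  rw [Finset.sum_comm, Finset.mul_sum]
  refine Finset.sum_congr rfl fun x _ => ?_
  rw [Finset.sum_comm, Finset.mul_sum]
  refine Finset.sum_congr rfl fun y _ => ?_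
  rw [← Finset.mul_sum, orth]
  split_ifs <;> ring

lemma T_inv :
    ∑ x ∈ (({0}ᶜ : Finset (ZMod p)) ×ˢ ({0}ᶜ : Finset (ZMod p))),
      ∑ y ∈ (({0}ᶜ : Finset (ZMod p)) ×ˢ ({0}ᶜ : Finset (ZMod p))),
      (if x.1⁻¹ + x.2⁻¹ - (y.1⁻¹ + y.2⁻¹) = 0 then ψ (x.1 + x.2 - (y.1 + y.2)) else 0)
    = ∑ x ∈ (({0}ᶜ : Finset (ZMod p)) ×ˢ ({0}ᶜ : Finset (ZMod p))),
      ∑ y ∈ (({0}ᶜ : Finset (ZMod p)) ×ˢ ({0}ᶜ : Finset (ZMod p))),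
      (if x.1 + x.2 - (y.1 + y.2) = 0 then ψ (x.1⁻¹ + x.2⁻¹ - (y.1⁻¹ + y.2⁻¹)) else 0) := by
  rw [← Finset.sum_product', ← Finset.sum_product']
  refine Finset.sum_nbij' (fun q => ((q.1.1⁻¹, q.1.2⁻¹), (q.2.1⁻¹, q.2.2⁻¹)))
    (fun q => ((q.1.1⁻¹, q.1.2⁻¹), (q.2.1⁻¹, q.2.2⁻¹))) ?_ ?_ ?_ ?_ ?_
  · intro q hq
    simp only [Finset.mem_product, Finset.mem_compl, Finset.mem_singleton] at hq ⊢
    exact ⟨⟨inv_ne_zero hq.1.1, inv_ne_zero hq.1.2⟩, ⟨inv_ne_zero hq.2.1, inv_ne_zero hq.2.2⟩⟩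
  · intro q hq
    simp only [Finset.mem_product, Finset.mem_compl, Finset.mem_singleton] at hq ⊢
    exact ⟨⟨inv_ne_zero hq.1.1, inv_ne_zero hq.1.2⟩, ⟨inv_ne_zero hq.2.1, inv_ne_zero hq.2.2⟩⟩
  · intro q _; simp [inv_inv]
  · intro q _; simp [inv_inv]
  · intro q _; simp [inv_inv]

lemma conj_g (s : ZMod p) :
    (starRingEnd ℂ) (g s)
      = ∑ x ∈ (({0}ᶜ : Finset (ZMod p)) ×ˢ ({0}ᶜ : Finset (ZMod p))),
          if x.1 + x.2 = s then ψ (-(x.1⁻¹ + x.2⁻¹)) else 0 := by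
  rw [g, map_sum]
  refine Finset.sum_congr rfl fun x _ => ?_
  rw [apply_ite (starRingEnd ℂ), map_zero, conj_psi]

lemma T_fiber :
    ∑ x ∈ (({0}ᶜ : Finset (ZMod p)) ×ˢ ({0}ᶜ : Finset (ZMod p))),
      ∑ y ∈ (({0}ᶜ : Finset (ZMod p)) ×ˢ ({0}ᶜ : Finset (ZMod p))),
      (if x.1 + x.2 - (y.1 + y.2) = 0 then ψ (x.1⁻¹ + x.2⁻¹ - (y.1⁻¹ + y.2⁻¹)) else 0)
    = ∑ s : ZMod p, g s * (starRingEnd ℂ) (g s) := by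
  simp_rw [conj_g, g]
  rw [sum_fiber_mul (F := fun x : ZMod p × ZMod p => x.1 + x.2)
      (G := fun x => ψ (x.1⁻¹ + x.2⁻¹)) (H := fun x => ψ (-(x.1⁻¹ + x.2⁻¹)))]
  refine Finset.sum_congr rfl fun x _ => Finset.sum_congr rfl fun y _ => ?_
  rw [show (x.1⁻¹ + x.2⁻¹ - (y.1⁻¹ + y.2⁻¹)) = (x.1⁻¹ + x.2⁻¹) + -(y.1⁻¹ + y.2⁻¹) by ring,
    psi_add]
  exact if_congr sub_eq_zero (by rfl) rfl

noncomputable def h (m : ZMod p) : ℂ :=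
  ∑ u ∈ (({0, 1} : Finset (ZMod p))ᶜ), ψ (m * (u * (1 - u))⁻¹)

lemma card_N : (({0}ᶜ : Finset (ZMod p))).card = p - 1 := by
  rw [Finset.card_compl, Finset.card_singleton, ZMod.card]

lemma card_N' : ((({0, 1} : Finset (ZMod p))ᶜ)).card = p - 2 := by
  rw [Finset.card_compl, ZMod.card]
  congr 1
  rw [Finset.card_insert_of_notMem (by simp), Finset.card_singleton]

lemma g_zero : g (0 : ZMod p) = (p : ℂ) - 1 := by
  rw [g, Finset.sum_product]
  have step : ∀ a ∈ ({0}ᶜ : Finset (ZMod p)),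
      (∑ b ∈ ({0}ᶜ : Finset (ZMod p)), if a + b = 0 then ψ (a⁻¹ + b⁻¹) else 0) = 1 := by
    intro a ha
    simp only [Finset.mem_compl, Finset.mem_singleton] at ha
    have : ∀ b ∈ ({0}ᶜ : Finset (ZMod p)), (if a + b = 0 then ψ (a⁻¹ + b⁻¹) else 0)
        = if b = -a then ψ (a⁻¹ + b⁻¹) else 0 := by
      intro b _
      refine if_congr ?_ rfl rfl
      rw [add_comm, add_eq_zero_iff_eq_neg]
    rw [Finset.sum_congr rfl this, Finset.sum_ite_eq']
    rw [if_pos (by simp [ha])]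
    rw [inv_neg, add_neg_cancel, psi_zero]
  rw [Finset.sum_congr rfl step, Finset.sum_const, card_N, nsmul_eq_mul, mul_one,
    Nat.cast_sub hpF.out.one_le, Nat.cast_one]

lemma key_ident {s u : ZMod p} (hs : s ≠ 0) (hu : u ≠ 0) (hu1 : u ≠ 1) :
    (s * u)⁻¹ + (s - s * u)⁻¹ = s⁻¹ * (u * (1 - u))⁻¹ := by
  have h1 : (1 : ZMod p) - u ≠ 0 := sub_ne_zero.mpr (Ne.symm hu1)
  have h2 : s - s * u ≠ 0 := by
    rw [show s - s * u = s * (1 - u) by ring]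
    exact mul_ne_zero hs h1
  field_simp
  ring

lemma g_ne {s : ZMod p} (hs : s ≠ 0) : g s = h s⁻¹ := by
  rw [g, Finset.sum_product, h]
  have step : ∀ a ∈ ({0}ᶜ : Finset (ZMod p)),
      (∑ b ∈ ({0}ᶜ : Finset (ZMod p)), if a + b = s then ψ (a⁻¹ + b⁻¹) else 0)
        = if s - a ≠ 0 then ψ (a⁻¹ + (s - a)⁻¹) else 0 := by
    intro a _
    have : ∀ b ∈ ({0}ᶜ : Finset (ZMod p)), (if a + b = s then ψ (a⁻¹ + b⁻¹) else 0)
        = if b = s - a then ψ (a⁻¹ + b⁻¹) else 0 := by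
      intro b _
      refine if_congr ?_ rfl rfl
      constructor
      · intro hh; linear_combination hh
      · intro hh; linear_combination hh
    rw [Finset.sum_congr rfl this, Finset.sum_ite_eq']
    simp only [Finset.mem_compl, Finset.mem_singleton]
  rw [Finset.sum_congr rfl step]
  rw [Finset.sum_ite, Finset.sum_const_zero, add_zero]
  symm
  refine Finset.sum_nbij' (fun u => s * u) (fun a => s⁻¹ * a) ?_ ?_ ?_ ?_ ?_
  · intro u hu
    simp only [Finset.mem_compl, Finset.mem_singleton, Finset.mem_insert, not_or,
      Finset.mem_filter] at hu ⊢
    refine ⟨mul_ne_zero hs hu.1, ?_⟩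
    rw [show s - s * u = s * (1 - u) by ring]
    exact mul_ne_zero hs (sub_ne_zero.mpr (Ne.symm hu.2))
  · intro a ha
    simp only [Finset.mem_compl, Finset.mem_singleton, Finset.mem_insert, not_or,
      Finset.mem_filter] at ha ⊢
    constructor
    · intro h0
      apply ha.1
      have := mul_eq_zero.mp h0
      rcases this with h|h
      · exact absurd h (inv_ne_zero hs)
      · exact h
    · intro h1
      apply ha.2
      have h2 := congrArg (fun z => s * z) h1
      simp only [← mul_assoc, mul_inv_cancel₀ hs, one_mul, mul_one] at h2
      rw [h2, sub_self]
  · intro u _; field_simp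
  · intro a _; field_simp
  · intro u hu
    simp only [Finset.mem_compl, Finset.mem_insert, Finset.mem_singleton, not_or] at hu
    rw [key_ident hs hu.1 hu.2]

lemma sum_N (f : ZMod p → ℂ) :
    ∑ m ∈ ({0}ᶜ : Finset (ZMod p)), f m = (∑ m : ZMod p, f m) - f 0 := by
  have := Finset.sum_compl_add_sum ({0} : Finset (ZMod p)) f
  rw [Finset.sum_singleton] at this
  linear_combination this

lemma orthN (t : ZMod p) :
    ∑ m ∈ ({0}ᶜ : Finset (ZMod p)), ψ (m * t) = (if t = 0 then (p : ℂ) else 0) - 1 := by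
  rw [sum_N, orth]
  simp [psi_zero]

lemma qcond {u x : ZMod p} (hu1 : u ≠ 1) (hx1 : x ≠ 1) :
    ((u * (1 - u))⁻¹ - (x * (1 - x))⁻¹ = 0) ↔ (x = u ∨ x = 1 - u) := by
  rw [sub_eq_zero, inv_inj]
  constructor
  · intro hh
    have hz : (x - u) * (x - (1 - u)) = 0 := by linear_combination hh
    rcases mul_eq_zero.mp hz with hc | hc
    · exact Or.inl (sub_eq_zero.mp hc)
    · exact Or.inr (sub_eq_zero.mp hc)
  · rintro (rfl | rfl)
    · rfl
    · ring

lemma count_x {u : ZMod p} (hu : u ∈ (({0, 1} : Finset (ZMod p))ᶜ)) :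
    ∑ x ∈ (({0, 1} : Finset (ZMod p))ᶜ), (if x = u ∨ x = 1 - u then (p : ℂ) else 0)
      = if u = 1 - u then (p : ℂ) else 2 * p := by
  simp only [Finset.mem_compl, Finset.mem_insert, Finset.mem_singleton, not_or] at hu
  have hsub : ({u, 1 - u} : Finset (ZMod p)) ⊆ (({0, 1} : Finset (ZMod p))ᶜ) := by
    intro x hx
    simp only [Finset.mem_insert, Finset.mem_singleton] at hx
    simp only [Finset.mem_compl, Finset.mem_insert, Finset.mem_singleton, not_or]
    rcases hx with rfl | rfl
    · exact ⟨hu.1, hu.2⟩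
    · exact ⟨sub_ne_zero.mpr (Ne.symm hu.2), fun hh => hu.1 (by linear_combination -hh)⟩
  rw [← Finset.sum_subset hsub ?_]
  · by_cases hc : u = 1 - u
    · rw [if_pos hc,
        show ({u, 1 - u} : Finset (ZMod p)) = {u} by
          rw [← hc]; exact Finset.insert_eq_self.mpr (Finset.mem_singleton_self u),
        Finset.sum_singleton, if_pos (Or.inl rfl)]
    · rw [if_neg hc, Finset.sum_insert (by simpa [Finset.mem_singleton] using hc),
        Finset.sum_singleton, if_pos (Or.inl rfl), if_pos (Or.inr rfl)]
      ring
  · intro x _ hx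
    simp only [Finset.mem_insert, Finset.mem_singleton, not_or] at hx
    exact if_neg (by tauto)

lemma count_u (h2 : (2 : ZMod p) ≠ 0) :
    ∑ u ∈ (({0, 1} : Finset (ZMod p))ᶜ), (if u = 1 - u then (p : ℂ) else 2 * p)
      = 2 * (p : ℂ) * ((p : ℂ) - 2) - p := by
  have hc : ∀ u : ZMod p, (u = 1 - u) ↔ (u = (2 : ZMod p)⁻¹) := by
    intro u
    constructor
    · intro hu
      have h21 : u * (2 : ZMod p) = 1 := by linear_combination hu
      exact eq_inv_of_mul_eq_one_left h21
    · rintro rfl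
      have := mul_inv_cancel₀ h2
      linear_combination this
  have hmem : (2 : ZMod p)⁻¹ ∈ (({0, 1} : Finset (ZMod p))ᶜ) := by
    simp only [Finset.mem_compl, Finset.mem_insert, Finset.mem_singleton, not_or]
    refine ⟨inv_ne_zero h2, fun hh => ?_⟩
    have h22 := mul_inv_cancel₀ h2
    rw [hh, mul_one] at h22
    exact one_ne_zero (α := ZMod p) (by linear_combination h22)
  have step : ∀ u ∈ (({0, 1} : Finset (ZMod p))ᶜ), (if u = 1 - u then (p : ℂ) else 2 * p)
      = 2 * (p : ℂ) - (if u = (2 : ZMod p)⁻¹ then (p : ℂ) else 0) := by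
    intro u _
    rw [if_congr (hc u) rfl rfl]
    split_ifs <;> ring
  rw [Finset.sum_congr rfl step, Finset.sum_sub_distrib, Finset.sum_const,
    Finset.sum_ite_eq' _ _ (fun _ => (p : ℂ)), if_pos hmem, card_N', nsmul_eq_mul,
    Nat.cast_sub hpF.out.two_le]
  push_cast
  ring

lemma sum_h (h2 : (2 : ZMod p) ≠ 0) :
    ∑ m ∈ ({0}ᶜ : Finset (ZMod p)), h m * (starRingEnd ℂ) (h m)
      = (2 * (p : ℂ) * ((p : ℂ) - 2) - p) - ((p : ℂ) - 2) ^ 2 := by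
  have conj_h : ∀ m : ZMod p, (starRingEnd ℂ) (h m)
      = ∑ x ∈ (({0, 1} : Finset (ZMod p))ᶜ), ψ (-(m * (x * (1 - x))⁻¹)) := by
    intro m
    rw [h, map_sum]
    exact Finset.sum_congr rfl fun x _ => conj_psi _
  have expand_h : ∀ m : ZMod p, h m * (starRingEnd ℂ) (h m)
      = ∑ u ∈ (({0, 1} : Finset (ZMod p))ᶜ), ∑ x ∈ (({0, 1} : Finset (ZMod p))ᶜ),
          ψ (m * ((u * (1 - u))⁻¹ - (x * (1 - x))⁻¹)) := by
    intro m
    rw [conj_h, h, Finset.sum_mul_sum]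
    refine Finset.sum_congr rfl fun u _ => Finset.sum_congr rfl fun x _ => ?_
    rw [← psi_add]
    congr 1
    ring
  rw [Finset.sum_congr rfl (fun m _ => expand_h m), Finset.sum_comm]
  have step : ∀ u ∈ (({0, 1} : Finset (ZMod p))ᶜ),
      (∑ m ∈ ({0}ᶜ : Finset (ZMod p)), ∑ x ∈ (({0, 1} : Finset (ZMod p))ᶜ),
        ψ (m * ((u * (1 - u))⁻¹ - (x * (1 - x))⁻¹)))
      = (if u = 1 - u then (p : ℂ) else 2 * p) - ((p : ℂ) - 2) := by
    intro u hu
    rw [Finset.sum_comm]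
    have inner : ∀ x ∈ (({0, 1} : Finset (ZMod p))ᶜ),
        (∑ m ∈ ({0}ᶜ : Finset (ZMod p)), ψ (m * ((u * (1 - u))⁻¹ - (x * (1 - x))⁻¹)))
        = (if x = u ∨ x = 1 - u then (p : ℂ) else 0) - 1 := by
      intro x hx
      rw [orthN]
      congr 1
      simp only [Finset.mem_compl, Finset.mem_insert, Finset.mem_singleton, not_or] at hu hx
      rw [if_congr (qcond hu.2 hx.2) rfl rfl]
    rw [Finset.sum_congr rfl inner, Finset.sum_sub_distrib, Finset.sum_const, count_x hu,
      card_N', nsmul_eq_mul, mul_one, Nat.cast_sub hpF.out.two_le]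
    push_cast
    ring
  rw [Finset.sum_congr rfl step, Finset.sum_sub_distrib, Finset.sum_const, count_u h2,
    card_N', nsmul_eq_mul, Nat.cast_sub hpF.out.two_le]
  push_cast
  ring

lemma T_total (h2 : (2 : ZMod p) ≠ 0) :
    ∑ s : ZMod p, g s * (starRingEnd ℂ) (g s) = 2 * (p : ℂ) ^ 2 - 3 * p - 3 := by
  have hsplit := Finset.sum_compl_add_sum ({0} : Finset (ZMod p))
    (fun s => g s * (starRingEnd ℂ) (g s))
  rw [Finset.sum_singleton] at hsplit
  have hg0 : g (0 : ZMod p) * (starRingEnd ℂ) (g (0 : ZMod p)) = ((p : ℂ) - 1) ^ 2 := by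
    rw [g_zero]
    simp only [map_sub, map_one, Complex.conj_natCast]
    ring
  have hN : ∑ s ∈ ({0}ᶜ : Finset (ZMod p)), g s * (starRingEnd ℂ) (g s)
      = ∑ m ∈ ({0}ᶜ : Finset (ZMod p)), h m * (starRingEnd ℂ) (h m) := by
    refine Finset.sum_nbij' (fun s => s⁻¹) (fun m => m⁻¹) ?_ ?_ ?_ ?_ ?_
    · intro s hs
      simp only [Finset.mem_compl, Finset.mem_singleton] at hs ⊢
      exact inv_ne_zero hs
    · intro s hs
      simp only [Finset.mem_compl, Finset.mem_singleton] at hs ⊢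
      exact inv_ne_zero hs
    · intro s _; simp
    · intro s _; simp
    · intro s hs
      simp only [Finset.mem_compl, Finset.mem_singleton] at hs
      rw [g_ne hs]
  rw [← hsplit, hN, sum_h h2, hg0]
  ring

lemma S_total (h2 : (2 : ZMod p) ≠ 0) :
    ∑ m : ZMod p, (K m * (starRingEnd ℂ) (K m)) ^ 2
      = 2 * (p : ℂ) ^ 3 - 3 * (p : ℂ) ^ 2 - 3 * p := by
  rw [S_eq, T_inv, T_fiber, T_total h2]
  ring

lemma bridge_inner (m : ℕ) :
    ∑ a ∈ Finset.Icc 1 (p - 1),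
      Complex.exp (2 * Real.pi * Complex.I
        * ((a : ℂ) + (m : ℂ) * (((a : ZMod p)⁻¹).val : ℂ)) / p)
      = K ((m : ZMod p)) := by
  have hp2 : 2 ≤ p := hpF.out.two_le
  rw [K]
  refine Finset.sum_nbij' (fun a : ℕ => (a : ZMod p)) (fun x : ZMod p => x.val) ?_ ?_ ?_ ?_ ?_
  · intro a ha
    simp only [Finset.mem_Icc] at ha
    simp only [Finset.mem_compl, Finset.mem_singleton]
    have hlt : a < p := by omega
    intro h0
    have hv := ZMod.val_natCast_of_lt hlt
    rw [h0, ZMod.val_zero] at hv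
    omega
  · intro x hx
    simp only [Finset.mem_compl, Finset.mem_singleton] at hx
    simp only [Finset.mem_Icc]
    have h1 : x.val ≠ 0 := fun hh => hx ((ZMod.val_eq_zero x).mp hh)
    have h2 : x.val < p := ZMod.val_lt x
    omega
  · intro a ha
    simp only [Finset.mem_Icc] at ha
    exact ZMod.val_natCast_of_lt (by omega)
  · intro x _
    simp [ZMod.natCast_val, ZMod.cast_id]
  · intro a ha
    have key : (2 * Real.pi * Complex.I
        * ((a : ℂ) + (m : ℂ) * ((((a : ZMod p))⁻¹).val : ℂ)) / p)
        = ((a + m * (((a : ZMod p))⁻¹).val : ℕ) : ℂ) * (2 * Real.pi * Complex.I / p) := by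
      push_cast
      ring
    rw [key, Complex.exp_nat_mul, ← ζ, ← psi_natCast]
    congr 1
    push_cast [ZMod.natCast_val, ZMod.cast_id]
    ring

end Salie

theorem stmt0 (p : ℕ) (hp : p.Prime) (hodd : Odd p) :
    ∑ m ∈ Finset.range p,
      (‖∑ a ∈ Finset.Icc 1 (p - 1),
        Complex.exp (2 * Real.pi * Complex.I * ((a : ℂ) + (m : ℂ) * (((a : ZMod p)⁻¹).val : ℂ)) / p)‖) ^ 4
    = 2 * (p : ℝ) ^ 3 - 3 * (p : ℝ) ^ 2 - 3 * (p : ℝ) := by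
  haveI : Fact p.Prime := ⟨hp⟩
  have hp2 : p ≠ 2 := by
    rintro rfl
    rw [Nat.odd_iff] at hodd
    omega
  have h2 : (2 : ZMod p) ≠ 0 := by
    have : ((2 : ℕ) : ZMod p) ≠ 0 := by
      rw [Ne, ZMod.natCast_eq_zero_iff]
      intro hdvd
      exact hp2 ((Nat.prime_dvd_prime_iff_eq hp Nat.prime_two).mp hdvd)
    simpa using this
  have key : ∀ z : ℂ, ((‖z‖ ^ 4 : ℝ) : ℂ) = (z * (starRingEnd ℂ) z) ^ 2 := by
    intro z
    rw [Complex.mul_conj, show ‖z‖ ^ 4 = Complex.normSq z ^ 2 by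
      rw [← Complex.sq_norm]; ring]
    push_cast
    ring
  apply Complex.ofReal_injective
  rw [Complex.ofReal_sum]
  have step1 : ∀ m ∈ Finset.range p,
      ((((‖∑ a ∈ Finset.Icc 1 (p - 1),
        Complex.exp (2 * Real.pi * Complex.I * ((a : ℂ) + (m : ℂ) * (((a : ZMod p)⁻¹).val : ℂ)) / p)‖) ^ 4 : ℝ)) : ℂ)
      = (Salie.K ((m : ZMod p)) * (starRingEnd ℂ) (Salie.K ((m : ZMod p)))) ^ 2 := by
    intro m _
    rw [key, Salie.bridge_inner]
  rw [Finset.sum_congr rfl step1]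
  have step2 : ∑ m ∈ Finset.range p,
      (Salie.K ((m : ZMod p)) * (starRingEnd ℂ) (Salie.K ((m : ZMod p)))) ^ 2
      = ∑ m : ZMod p, (Salie.K m * (starRingEnd ℂ) (Salie.K m)) ^ 2 := by
    refine Finset.sum_nbij' (fun m : ℕ => (m : ZMod p)) (fun x : ZMod p => x.val) ?_ ?_ ?_ ?_ ?_
    · intro a _; exact Finset.mem_univ _
    · intro x _; exact Finset.mem_range.mpr (ZMod.val_lt x)
    · intro a ha; exact ZMod.val_natCast_of_lt (Finset.mem_range.mp ha)
    · intro x _; simp [ZMod.natCast_val, ZMod.cast_id]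
    · intro a _; rfl
  rw [step2, Salie.S_total h2]
  push_cast
  ring
end

section
/- For any odd prime p, one has the identity ((−1/p)) · ∑_{c=1}^{p-1} ((c³ + c² + c)/p) − ∑_{b=1}^{p-1} (((b²+1)(b²+4b+1))/p) = 2, where (·/p) denotes the Legendre symbol. -/
open Finset Complex Real

namespace Stmt1Aux

variable {p : ℕ} [hp : Fact p.Prime]

local notation "χ" => quadraticChar (ZMod p)

lemma char_ne_two (hp2 : p ≠ 2) : ringChar (ZMod p) ≠ 2 := by
  rw [ZMod.ringChar_zmod_n]; exact hp2

lemma two_ne_zero' (hp2 : p ≠ 2) : (2 : ZMod p) ≠ 0 := by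
  intro h
  have h' : ((2:ℕ) : ZMod p) = 0 := by exact_mod_cast h
  rw [ZMod.natCast_eq_zero_iff] at h'
  exact hp2 ((Nat.prime_dvd_prime_iff_eq hp.out Nat.prime_two).mp h')

lemma three_ne_zero' (hp3 : p ≠ 3) : (3 : ZMod p) ≠ 0 := by
  intro h
  have h' : ((3:ℕ) : ZMod p) = 0 := by exact_mod_cast h
  rw [ZMod.natCast_eq_zero_iff] at h'
  exact hp3 ((Nat.prime_dvd_prime_iff_eq hp.out Nat.prime_three).mp h')

lemma six_ne_zero' (hp2 : p ≠ 2) (hp3 : p ≠ 3) : (6 : ZMod p) ≠ 0 := by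
  have h : (6 : ZMod p) = 2 * 3 := by norm_num
  rw [h]
  exact mul_ne_zero (two_ne_zero' hp2) (three_ne_zero' hp3)

lemma twelve_ne_zero' (hp2 : p ≠ 2) (hp3 : p ≠ 3) : (12 : ZMod p) ≠ 0 := by
  have h : (12 : ZMod p) = 2 * 6 := by norm_num
  rw [h]
  exact mul_ne_zero (two_ne_zero' hp2) (six_ne_zero' hp2 hp3)

/-- helper: split off the value at 0 -/
lemma sum_ite_zero (f : ZMod p → ℤ) :
    ∑ u : ZMod p, (if u = 0 then 0 else f u) = (∑ u : ZMod p, f u) - f 0 := by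
  have h : ∀ u : ZMod p, (if u = 0 then 0 else f u)
      = f u - (if u = 0 then f u else 0) := by
    intro u; split <;> simp
  simp_rw [h]
  rw [Finset.sum_sub_distrib, Finset.sum_ite_eq' Finset.univ (0 : ZMod p) f]
  simp

/-- counting solutions of `d^2 - t*d + 1 = 0` -/
lemma card_sols (hp2 : p ≠ 2) (t : ZMod p) :
    ((Finset.univ.filter (fun d : ZMod p => d^2 - t*d + 1 = 0)).card : ℤ)
      = 1 + χ (t^2 - 4) := by
  have h2 : (2 : ZMod p) ≠ 0 := two_ne_zero' hp2
  have hcard := quadraticChar_card_sqrts (char_ne_two hp2) (t^2 - 4)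
  have hset : ({x : ZMod p | x ^ 2 = t^2 - 4}.toFinset)
      = Finset.univ.filter (fun x : ZMod p => x^2 = t^2 - 4) := by
    ext x; simp [Set.mem_toFinset]
  rw [hset] at hcard
  have hbij : (Finset.univ.filter (fun d : ZMod p => d^2 - t*d + 1 = 0)).card
      = (Finset.univ.filter (fun x : ZMod p => x^2 = t^2 - 4)).card := by
    apply Finset.card_bij' (fun d _ => 2*d - t) (fun s _ => (s + t) * 2⁻¹)
    case hi =>
      intro d hd
      simp only [Finset.mem_filter, Finset.mem_univ, true_and] at hd ⊢
      linear_combination 4 * hd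
    case hj =>
      intro s hs
      simp only [Finset.mem_filter, Finset.mem_univ, true_and] at hs ⊢
      field_simp
      linear_combination hs
    case left_inv =>
      intro d _
      field_simp
      ring
    case right_inv =>
      intro s _
      field_simp
      ring
  rw [hbij, hcard]
  ring

/-- the key parametrization lemma -/
lemma param (hp2 : p ≠ 2) (g : ZMod p → ℤ) :
    ∑ d : ZMod p, (if d = 0 then 0 else g (d + d⁻¹))
      = ∑ t : ZMod p, (1 + χ (t^2 - 4)) * g t := by
  have lhs_eq : ∀ d : ZMod p, (if d = 0 then 0 else g (d + d⁻¹))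
      = ∑ t : ZMod p, (if d^2 - t*d + 1 = 0 then g t else 0) := by
    intro d
    by_cases hd : d = 0
    · subst hd
      simp
    · rw [if_neg hd]
      have hdd : d * d⁻¹ = 1 := mul_inv_cancel₀ hd
      have hiff : ∀ t : ZMod p, (d^2 - t*d + 1 = 0) ↔ (t = d + d⁻¹) := by
        intro t
        constructor
        · intro h
          have ht : t * d = d^2 + 1 := by linear_combination -h
          calc t = t * (d * d⁻¹) := by rw [hdd, mul_one]
            _ = (t * d) * d⁻¹ := by ring
            _ = (d^2 + 1) * d⁻¹ := by rw [ht]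
            _ = d * (d * d⁻¹) + d⁻¹ := by ring
            _ = d + d⁻¹ := by rw [hdd, mul_one]
        · intro h
          subst h
          field_simp
          ring
      rw [Finset.sum_congr rfl (fun t _ => if_congr (hiff t) rfl rfl),
        Finset.sum_ite_eq' Finset.univ (d + d⁻¹) g, if_pos (Finset.mem_univ _)]
  simp_rw [lhs_eq]
  rw [Finset.sum_comm]
  refine Finset.sum_congr rfl fun t _ => ?_
  rw [← Finset.sum_filter, Finset.sum_const, nsmul_eq_mul, card_sols hp2 t]

lemma sum_sq_sub_four (hp2 : p ≠ 2) : ∑ t : ZMod p, χ (t^2 - 4) = -1 := by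
  have h := param hp2 (fun _ => (1:ℤ))
  rw [sum_ite_zero] at h
  simp only [mul_one] at h
  rw [Finset.sum_add_distrib] at h
  simp only [Finset.sum_const, Finset.card_univ, ZMod.card, nsmul_eq_mul, mul_one] at h
  linarith

lemma sum_shift_one : ∑ t : ZMod p, χ (t - 1) = ∑ t : ZMod p, χ t :=
  Fintype.sum_equiv (Equiv.subRight (1 : ZMod p)) _ _ (fun _ => rfl)

lemma T1_eq (hp2 : p ≠ 2) :
    (χ (-1)) * (∑ x : ZMod p, χ (x^3 + x^2 + x))
      = ∑ t : ZMod p, χ ((t^2 - 4) * (t - 1)) := by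
  rw [Finset.mul_sum]
  have step1 : ∑ x : ZMod p, χ (-1) * χ (x^3 + x^2 + x)
      = ∑ x : ZMod p, χ (x^3 - x^2 + x) :=
    Fintype.sum_equiv (Equiv.neg (ZMod p)) _ _ (fun x => by
      rw [← map_mul]
      apply congrArg
      show (-1 : ZMod p) * (x^3 + x^2 + x) = (-x)^3 - (-x)^2 + (-x)
      ring)
  rw [step1]
  have step2 : ∀ x : ZMod p, χ (x^3 - x^2 + x)
      = (if x = 0 then 0 else χ (x + x⁻¹ - 1)) := by
    intro x
    by_cases hx : x = 0
    · simp [hx]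
    · rw [if_neg hx]
      have hxx : x^3 - x^2 + x = x^2 * (x + x⁻¹ - 1) := by
        field_simp
        ring
      rw [hxx, map_mul, quadraticChar_sq_one' hx, one_mul]
  simp_rw [step2]
  rw [param hp2 (fun t => χ (t - 1))]
  simp_rw [add_mul, one_mul]
  rw [Finset.sum_add_distrib, sum_shift_one, quadraticChar_sum_zero (char_ne_two hp2),
    zero_add]
  exact Finset.sum_congr rfl fun t _ => (map_mul χ _ _).symm

lemma sum_t_sq_add_four_t (hp2 : p ≠ 2) : ∑ t : ZMod p, χ (t^2 + 4*t) = -1 := by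
  have h : ∑ t : ZMod p, χ (t^2 + 4*t) = ∑ s : ZMod p, χ (s^2 - 4) :=
    Fintype.sum_equiv (Equiv.addRight (2 : ZMod p)) _ _ (fun x => by
      apply congrArg
      show x^2 + 4*x = (x + 2)^2 - 4
      ring)
  rw [h, sum_sq_sub_four hp2]

lemma quartic_eq (hp2 : p ≠ 2) :
    ∑ t : ZMod p, χ ((t^2 - 4) * (t^2 + 4*t))
      = (∑ u : ZMod p, χ ((1 + 2*u) * (1 + 4*u) * (1 + 6*u))) - 1 := by
  have key : ∀ t : ZMod p, χ ((t^2 - 4) * (t^2 + 4*t))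
      = (if (t - 2)⁻¹ = 0 then 0
          else χ ((1 + 2*(t - 2)⁻¹) * (1 + 4*(t - 2)⁻¹) * (1 + 6*(t - 2)⁻¹))) := by
    intro t
    by_cases ht : t = 2
    · subst ht
      norm_num
    · have hd : t - 2 ≠ 0 := sub_ne_zero.mpr ht
      have hu : (t - 2)⁻¹ ≠ 0 := inv_ne_zero hd
      rw [if_neg hu]
      have hident : (1 + 2*(t - 2)⁻¹) * (1 + 4*(t - 2)⁻¹) * (1 + 6*(t - 2)⁻¹)
          = ((t^2 - 4) * (t^2 + 4*t)) * (((t - 2)⁻¹)^2)^2 := by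
        field_simp
        ring
      rw [hident, map_mul χ ((t^2 - 4) * (t^2 + 4*t)) ((((t - 2)⁻¹)^2)^2),
        quadraticChar_sq_one' (pow_ne_zero 2 hu), mul_one]
  simp_rw [key]
  have hre : ∑ t : ZMod p,
        (if (t - 2)⁻¹ = 0 then 0
          else χ ((1 + 2*(t - 2)⁻¹) * (1 + 4*(t - 2)⁻¹) * (1 + 6*(t - 2)⁻¹)))
      = ∑ u : ZMod p,
        (if u = 0 then 0 else χ ((1 + 2*u) * (1 + 4*u) * (1 + 6*u))) :=
    Fintype.sum_equiv ((Equiv.subRight (2 : ZMod p)).trans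
      (Function.Involutive.toPerm _ (inv_involutive))) _ _ (fun t => rfl)
  rw [hre, sum_ite_zero]
  norm_num

lemma cubic_eq (hp2 : p ≠ 2) (hp3 : p ≠ 3) :
    ∑ t : ZMod p, χ ((t^2 - 4) * (t - 1))
      = ∑ u : ZMod p, χ ((1 + 2*u) * (1 + 4*u) * (1 + 6*u)) := by
  have h12 : (12 : ZMod p) ≠ 0 := twelve_ne_zero' hp2 hp3
  have h6 : (6 : ZMod p) ≠ 0 := six_ne_zero' hp2 hp3
  refine Fintype.sum_equiv ((Equiv.subRight (4 : ZMod p)).trans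
      (Equiv.mulRight₀ (12 : ZMod p)⁻¹ (inv_ne_zero h12))) _ _ (fun v => ?_)
  show χ ((v^2 - 4) * (v - 1)) = χ ((1 + 2*((v - 4) * 12⁻¹)) * (1 + 4*((v - 4) * 12⁻¹))
      * (1 + 6*((v - 4) * 12⁻¹)))
  have hident : (1 + 2*((v - 4) * 12⁻¹)) * (1 + 4*((v - 4) * 12⁻¹))
      * (1 + 6*((v - 4) * 12⁻¹)) = ((v^2 - 4) * (v - 1)) * (6⁻¹)^2 := by
    field_simp
    ring
  rw [hident, map_mul χ ((v^2 - 4) * (v - 1)) ((6⁻¹ : ZMod p)^2),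
    quadraticChar_sq_one' (inv_ne_zero h6), mul_one]

lemma T2_eq (hp2 : p ≠ 2) (hp3 : p ≠ 3) :
    ∑ x : ZMod p, χ ((x^2 + 1) * (x^2 + 4*x + 1))
      = (∑ t : ZMod p, χ ((t^2 - 4) * (t - 1))) - 1 := by
  have step1 : ∀ x : ZMod p, χ ((x^2 + 1) * (x^2 + 4*x + 1))
      = (if x = 0 then 0 else χ ((x + x⁻¹)^2 + 4*(x + x⁻¹)))
        + (if x = 0 then 1 else 0) := by
    intro x
    by_cases hx : x = 0
    · subst hx
      norm_num
    · rw [if_neg hx, if_neg hx, add_zero]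
      have hxx : (x^2 + 1) * (x^2 + 4*x + 1) = x^2 * ((x + x⁻¹)^2 + 4*(x + x⁻¹)) := by
        field_simp
        ring
      rw [hxx, map_mul, quadraticChar_sq_one' hx, one_mul]
  simp_rw [step1]
  rw [Finset.sum_add_distrib, param hp2 (fun t => χ (t^2 + 4*t))]
  have hone : ∑ x : ZMod p, (if x = 0 then (1:ℤ) else 0) = 1 := by
    rw [Finset.sum_ite_eq' Finset.univ (0 : ZMod p) (fun _ => (1:ℤ)),
      if_pos (Finset.mem_univ _)]
  rw [hone]
  simp_rw [add_mul, one_mul]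
  rw [Finset.sum_add_distrib, sum_t_sq_add_four_t hp2]
  have hmerge : ∑ t : ZMod p, χ (t^2 - 4) * χ (t^2 + 4*t)
      = ∑ t : ZMod p, χ ((t^2 - 4) * (t^2 + 4*t)) :=
    Finset.sum_congr rfl fun t _ => (map_mul χ _ _).symm
  rw [hmerge, quartic_eq hp2, ← cubic_eq hp2 hp3]
  ring

/-- conversion from sums over `Icc 1 (p-1)` to sums over `ZMod p` -/
lemma icc_sum (g : ZMod p → ℤ) :
    ∑ c ∈ Finset.Icc 1 (p - 1), g (c : ZMod p) = (∑ x : ZMod p, g x) - g 0 := by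
  haveI : NeZero p := ⟨hp.out.ne_zero⟩
  have hp1 : 0 < p := hp.out.pos
  have hIcc : Finset.Icc 1 (p - 1) = Finset.Ico 1 p := by
    rw [← Finset.Ico_add_one_right_eq_Icc, Nat.sub_add_cancel (show 1 ≤ p from hp1)]
  have hrange : ∑ c ∈ Finset.range p, g (c : ZMod p) = ∑ x : ZMod p, g x :=
    Finset.sum_nbij' (fun c => (c : ZMod p)) (fun x => x.val)
      (fun a _ => Finset.mem_univ _)
      (fun x _ => Finset.mem_range.mpr (ZMod.val_lt x))
      (fun a ha => ZMod.val_cast_of_lt (Finset.mem_range.mp ha))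
      (fun x _ => ZMod.natCast_rightInverse x)
      (fun a _ => rfl)
  have hsplit : ∑ c ∈ Finset.range p, g (c : ZMod p)
      = g ((0 : ℕ) : ZMod p) + ∑ c ∈ Finset.Ico 1 p, g (c : ZMod p) := by
    rw [Finset.range_eq_Ico, Finset.sum_eq_sum_Ico_succ_bot hp1]
  rw [hrange] at hsplit
  rw [hIcc, eq_sub_iff_add_eq, add_comm]
  simpa using hsplit.symm

end Stmt1Aux

private lemma stmt1_three :
    (legendreSym 3 (-1)) * (∑ c ∈ Finset.Icc 1 (3 - 1),
        legendreSym 3 ((c : ℤ) ^ 3 + (c : ℤ) ^ 2 + (c : ℤ)))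
      - ∑ b ∈ Finset.Icc 1 (3 - 1),
        legendreSym 3 ((((b : ℤ) ^ 2 + 1) * ((b : ℤ) ^ 2 + 4 * (b : ℤ) + 1)))
    = 2 := by decide

theorem stmt1 (p : ℕ) [hp : Fact p.Prime] (hodd : Odd p) :
    (legendreSym p (-1)) * (∑ c ∈ Finset.Icc 1 (p - 1),
        legendreSym p ((c : ℤ) ^ 3 + (c : ℤ) ^ 2 + (c : ℤ)))
      - ∑ b ∈ Finset.Icc 1 (p - 1),
        legendreSym p ((((b : ℤ) ^ 2 + 1) * ((b : ℤ) ^ 2 + 4 * (b : ℤ) + 1)))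
    = 2 := by
  rcases eq_or_ne p 3 with h3 | h3
  · subst h3; exact stmt1_three
  · have hp2 : p ≠ 2 := by
      rintro rfl; exact absurd hodd (by decide)
    have hL : legendreSym p (-1) = quadraticChar (ZMod p) (-1) := by
      simp only [legendreSym, Int.cast_neg, Int.cast_one]
    have hc : ∀ c : ℕ, legendreSym p ((c:ℤ)^3 + (c:ℤ)^2 + (c:ℤ))
        = quadraticChar (ZMod p) ((c : ZMod p)^3 + (c : ZMod p)^2 + (c : ZMod p)) := by
      intro c
      show quadraticChar (ZMod p) (((c:ℤ)^3 + (c:ℤ)^2 + (c:ℤ) : ℤ) : ZMod p) = _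
      apply congrArg
      push_cast
      ring
    have hb : ∀ b : ℕ, legendreSym p (((b:ℤ)^2 + 1) * ((b:ℤ)^2 + 4*(b:ℤ) + 1))
        = quadraticChar (ZMod p)
            (((b : ZMod p)^2 + 1) * ((b : ZMod p)^2 + 4*(b : ZMod p) + 1)) := by
      intro b
      show quadraticChar (ZMod p)
        ((((b:ℤ)^2 + 1) * ((b:ℤ)^2 + 4*(b:ℤ) + 1) : ℤ) : ZMod p) = _
      apply congrArg
      push_cast
      ring
    rw [hL, Finset.sum_congr rfl (fun c _ => hc c), Finset.sum_congr rfl (fun b _ => hb b),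
      Stmt1Aux.icc_sum (fun x : ZMod p => quadraticChar (ZMod p) (x^3 + x^2 + x)),
      Stmt1Aux.icc_sum (fun x : ZMod p =>
        quadraticChar (ZMod p) ((x^2 + 1) * (x^2 + 4*x + 1)))]
    have e1 := Stmt1Aux.T1_eq (p := p) hp2
    have e2 := Stmt1Aux.T2_eq (p := p) hp2 h3
    have hz1 : quadraticChar (ZMod p) ((0:ZMod p)^3 + (0:ZMod p)^2 + (0:ZMod p)) = 0 := by
      norm_num
    have hz2 : quadraticChar (ZMod p)
        (((0:ZMod p)^2 + 1) * ((0:ZMod p)^2 + 4*(0:ZMod p) + 1)) = 1 := by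
      norm_num
    simp only [hz1, hz2, sub_zero]
    rw [e1, e2]
    ring
end

section
/- Let p be an odd prime with 3 | (p − 1), and let n be an integer with p ∤ n. Then ∑_{m=1}^{p-1} |∑_{a=0}^{p-1} e((m a³ + n a)/p)|⁴ = 2p³ − 7p². -/
open Finset Complex Real

namespace Stmt7

variable {p : ℕ} [Fact p.Prime]

/-- The standard additive character of `ZMod p` with values in `ℂ`. -/
noncomputable def psi : AddChar (ZMod p) ℂ := ZMod.stdAddChar

/-- The cubic-plus-linear exponential sum `T u m = ∑ₐ ψ(m a³ + u a)`. -/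
noncomputable def T (u m : ZMod p) : ℂ := ∑ a : ZMod p, psi (m * a ^ 3 + u * a)

/-- The fourth power of the modulus of `T u m`, written with conjugation. -/
noncomputable def Φ (u m : ZMod p) : ℂ := (T u m * (starRingEnd ℂ) (T u m)) ^ 2

/-- The fourth moment of the exponential sums. -/
noncomputable def V (u : ZMod p) : ℂ := ∑ m : ZMod p, Φ u m

lemma conj_psi (x : ZMod p) : (starRingEnd ℂ) (psi x) = psi (-x) := by
  show (starRingEnd ℂ) (ZMod.stdAddChar x) = ZMod.stdAddChar (-x)
  rw [ZMod.stdAddChar_apply, ZMod.stdAddChar_apply, ← Circle.coe_inv_eq_conj,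
    ← AddChar.map_neg_eq_inv]

lemma sum_psi (b : ZMod p) : ∑ x : ZMod p, psi (x * b) = if b = 0 then (p : ℂ) else 0 := by
  show ∑ x : ZMod p, ZMod.stdAddChar (x * b) = _
  rw [AddChar.sum_mulShift b (ZMod.isPrimitive_stdAddChar p)]
  simp [ZMod.card]

lemma conj_T (u m : ZMod p) : (starRingEnd ℂ) (T u m) = T (-u) (-m) := by
  rw [T, T, map_sum]
  refine Finset.sum_congr rfl fun a _ => ?_
  rw [conj_psi]
  congr 1; ring

lemma T_zero_right (u : ZMod p) : T u 0 = if u = 0 then (p : ℂ) else 0 := by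
  rw [T]
  simp_rw [zero_mul, zero_add]
  calc ∑ a : ZMod p, psi (u * a) = ∑ a : ZMod p, psi (a * u) := by simp_rw [mul_comm]
  _ = _ := sum_psi u

lemma hp_cast_sub_one : ((p : ℂ) - 1) = ((p - 1 : ℕ) : ℂ) := by
  have : 1 ≤ p := (Fact.out : p.Prime).one_lt.le
  push_cast [Nat.cast_sub this]
  ring

/-- The squared modulus of a quadratic exponential sum is `p`. -/
lemma quad_sum (h2 : (2 : ZMod p) ≠ 0) {α : ZMod p} (β : ZMod p) (hα : α ≠ 0) :
    (∑ c : ZMod p, psi (α * c ^ 2 + β * c)) *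
      (starRingEnd ℂ) (∑ c : ZMod p, psi (α * c ^ 2 + β * c)) = (p : ℂ) := by
  rw [map_sum, Finset.sum_mul_sum]
  have key : ∀ c e : ZMod p, psi (α * c ^ 2 + β * c) * (starRingEnd ℂ) (psi (α * e ^ 2 + β * e))
      = psi ((α * c ^ 2 + β * c) - (α * e ^ 2 + β * e)) := by
    intro c e
    rw [conj_psi, ← AddChar.map_add_eq_mul, sub_eq_add_neg]
  simp_rw [key]
  rw [Finset.sum_comm]
  have key2 : ∀ e : ZMod p, ∑ c : ZMod p,
      psi ((α * c ^ 2 + β * c) - (α * e ^ 2 + β * e))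
      = ∑ h : ZMod p, psi (α * h ^ 2 + β * h) * psi (e * (2 * α * h)) := by
    intro e
    rw [← Equiv.sum_comp (Equiv.addLeft e)
      (fun c => psi ((α * c ^ 2 + β * c) - (α * e ^ 2 + β * e)))]
    refine Finset.sum_congr rfl fun h _ => ?_
    rw [← AddChar.map_add_eq_mul]
    congr 1
    show α * (e + h) ^ 2 + β * (e + h) - (α * e ^ 2 + β * e) = _
    ring
  simp_rw [key2]
  rw [Finset.sum_comm]
  have key3 : ∀ h : ZMod p, ∑ e : ZMod p, psi (α * h ^ 2 + β * h) * psi (e * (2 * α * h))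
      = psi (α * h ^ 2 + β * h) * (if 2 * α * h = 0 then (p:ℂ) else 0) := by
    intro h
    rw [← Finset.mul_sum, sum_psi]
  simp_rw [key3]
  rw [Finset.sum_eq_single 0]
  · simp
  · intro h _ hh
    rw [if_neg, mul_zero]
    exact mul_ne_zero (mul_ne_zero h2 hα) hh
  · simp

lemma Phi_expand (u m : ZMod p) : Φ u m = ∑ a : ZMod p, ∑ b : ZMod p, ∑ c : ZMod p, ∑ d : ZMod p,
    psi (m * (a ^ 3 + b ^ 3 - c ^ 3 - d ^ 3)) * psi (u * (a + b - c - d)) := by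
  have h1 : T u m * (starRingEnd ℂ) (T u m)
      = ∑ a : ZMod p, ∑ c : ZMod p, psi (m * (a ^ 3 - c ^ 3) + u * (a - c)) := by
    rw [T, map_sum, Finset.sum_mul_sum]
    refine sum_congr rfl fun a _ => sum_congr rfl fun c _ => ?_
    rw [conj_psi, ← AddChar.map_add_eq_mul]
    congr 1; ring
  rw [Φ, h1, sq, Finset.sum_mul_sum]
  refine sum_congr rfl fun a _ => sum_congr rfl fun b _ => ?_
  rw [Finset.sum_mul_sum]
  refine sum_congr rfl fun c _ => sum_congr rfl fun d _ => ?_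
  rw [← AddChar.map_add_eq_mul, ← AddChar.map_add_eq_mul]
  congr 1; ring

/-- The fourth moment over the linear coefficient, for a fixed nonzero cubic coefficient. -/
lemma sum_u (h2 : (2 : ZMod p) ≠ 0) (h3 : (3 : ZMod p) ≠ 0) {m : ZMod p} (hm : m ≠ 0) :
    ∑ u : ZMod p, Φ u m = (p : ℂ) ^ 2 * (2 * p - 1) := by
  have step1 : ∑ u : ZMod p, Φ u m
      = ∑ a : ZMod p, ∑ b : ZMod p, ∑ c : ZMod p, ∑ d : ZMod p,
        psi (m * (a ^ 3 + b ^ 3 - c ^ 3 - d ^ 3)) * (if a + b - c - d = 0 then (p:ℂ) else 0) := by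
    simp_rw [Phi_expand]
    rw [Finset.sum_comm]
    refine sum_congr rfl fun a _ => ?_
    rw [Finset.sum_comm]
    refine sum_congr rfl fun b _ => ?_
    rw [Finset.sum_comm]
    refine sum_congr rfl fun c _ => ?_
    rw [Finset.sum_comm]
    refine sum_congr rfl fun d _ => ?_
    rw [← Finset.mul_sum, sum_psi]
  have step2 : ∑ u : ZMod p, Φ u m
      = (p : ℂ) * ∑ a : ZMod p, ∑ b : ZMod p, ∑ c : ZMod p,
          psi (m * (a ^ 3 + b ^ 3 - c ^ 3 - (a + b - c) ^ 3)) := by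
    rw [step1, Finset.mul_sum]
    refine sum_congr rfl fun a _ => ?_
    rw [Finset.mul_sum]
    refine sum_congr rfl fun b _ => ?_
    rw [Finset.mul_sum]
    refine sum_congr rfl fun c _ => ?_
    rw [Finset.sum_eq_single (a + b - c)]
    · rw [if_pos (by ring), mul_comm]
    · intro d _ hd
      rw [if_neg (fun h => hd (by linear_combination -h)), mul_zero]
    · intro h; exact absurd (Finset.mem_univ _) h
  have step3 : ∑ a : ZMod p, ∑ b : ZMod p, ∑ c : ZMod p,
      psi (m * (a ^ 3 + b ^ 3 - c ^ 3 - (a + b - c) ^ 3))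
      = ∑ s : ZMod p, (∑ c : ZMod p, psi ((-3 * m * s) * c ^ 2 + (3 * m * s ^ 2) * c)) *
          (starRingEnd ℂ) (∑ a : ZMod p, psi ((-3 * m * s) * a ^ 2 + (3 * m * s ^ 2) * a)) := by
    have reb : ∀ a : ZMod p, ∑ b : ZMod p, ∑ c : ZMod p,
        psi (m * (a ^ 3 + b ^ 3 - c ^ 3 - (a + b - c) ^ 3))
        = ∑ s : ZMod p, ∑ c : ZMod p, psi (m * (a ^ 3 + (s - a) ^ 3 - c ^ 3 - (s - c) ^ 3)) := by
      intro a
      rw [← Equiv.sum_comp (Equiv.addLeft a)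
        (fun s => ∑ c : ZMod p, psi (m * (a ^ 3 + (s - a) ^ 3 - c ^ 3 - (s - c) ^ 3)))]
      refine sum_congr rfl fun b _ => sum_congr rfl fun c _ => ?_
      simp only [Equiv.coe_addLeft]
      congr 1
      ring
    simp_rw [reb]
    rw [Finset.sum_comm]
    refine sum_congr rfl fun s _ => ?_
    rw [Finset.sum_comm, map_sum, Finset.sum_mul_sum]
    refine sum_congr rfl fun c _ => sum_congr rfl fun a _ => ?_
    rw [conj_psi, ← AddChar.map_add_eq_mul]
    congr 1; ring
  have step4 : ∀ s : ZMod p, s ≠ 0 →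
      (∑ c : ZMod p, psi ((-3 * m * s) * c ^ 2 + (3 * m * s ^ 2) * c)) *
        (starRingEnd ℂ) (∑ a : ZMod p, psi ((-3 * m * s) * a ^ 2 + (3 * m * s ^ 2) * a))
      = (p : ℂ) := by
    intro s hs
    refine quad_sum h2 _ ?_
    intro h
    rcases mul_eq_zero.mp h with h' | h'
    · rcases mul_eq_zero.mp h' with h'' | h''
      · rw [neg_eq_zero] at h''; exact h3 h''
      · exact hm h''
    · exact hs h'
  have card0 : ∑ s : ZMod p, ((if s = 0 then (p:ℂ)^2 - p else 0) + p) = (p:ℂ)^2 - p + p * p := by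
    rw [Finset.sum_add_distrib, Finset.sum_ite_eq' Finset.univ (0 : ZMod p)]
    simp [ZMod.card, mul_comm]
  rw [step2, step3]
  have eval : ∀ s : ZMod p,
      (∑ c : ZMod p, psi ((-3 * m * s) * c ^ 2 + (3 * m * s ^ 2) * c)) *
        (starRingEnd ℂ) (∑ a : ZMod p, psi ((-3 * m * s) * a ^ 2 + (3 * m * s ^ 2) * a))
      = (if s = 0 then (p:ℂ)^2 - p else 0) + p := by
    intro s
    by_cases hs : s = 0
    · subst hs
      simp only [if_pos rfl]
      have : ∀ c : ZMod p, ((-3 * m * (0:ZMod p)) * c ^ 2 + (3 * m * (0:ZMod p) ^ 2) * c) = 0 := by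
        intro c; ring
      simp_rw [this]
      simp only [AddChar.map_zero_eq_one, Finset.sum_const, Finset.card_univ, ZMod.card,
        nsmul_eq_mul, mul_one, map_natCast]
      norm_num
      ring
    · rw [step4 s hs, if_neg hs, zero_add]
  simp_rw [eval]
  rw [card0]
  ring

lemma T_scale {t : ZMod p} (ht : t ≠ 0) (u m : ZMod p) : T (t * u) (t ^ 3 * m) = T u m := by
  rw [T, T, ← Equiv.sum_comp (Equiv.mulLeft₀ t ht) (fun a => psi (m * a ^ 3 + u * a))]
  refine sum_congr rfl fun a _ => ?_
  simp only [Equiv.mulLeft₀_apply]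
  congr 1; ring

lemma V_scale {t : ZMod p} (ht : t ≠ 0) (u : ZMod p) : V (t * u) = V u := by
  rw [V, V, ← Equiv.sum_comp (Equiv.mulLeft₀ (t ^ 3) (pow_ne_zero 3 ht)) (Φ (t * u))]
  refine sum_congr rfl fun m _ => ?_
  simp only [Equiv.mulLeft₀_apply]
  rw [Φ, Φ, T_scale ht]

lemma sum_phi_zero_right : ∑ u : ZMod p, Φ u 0 = (p : ℂ) ^ 4 := by
  have : ∀ u : ZMod p, Φ u 0 = if u = 0 then (p : ℂ) ^ 4 else 0 := by
    intro u
    rw [Φ, T_zero_right]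
    split
    · rw [map_natCast]; ring
    · simp
  simp_rw [this]
  rw [Finset.sum_ite_eq' Finset.univ (0 : ZMod p), if_pos (Finset.mem_univ _)]

/-- The pure cubic fourth moment, evaluated using a cubic multiplicative character
and Gauss sums. -/
lemma V_zero (h3 : (3:ℕ) ∣ p - 1) :
    V (0 : ZMod p) = (p : ℂ) ^ 4 + 6 * ((p:ℂ) - 1) * (p:ℂ) ^ 2 := by
  classical
  haveI : Fact (Nat.Prime 3) := ⟨by norm_num⟩
  have hprim : (ZMod.stdAddChar (N := p)).IsPrimitive := ZMod.isPrimitive_stdAddChar p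
  have hdvd : 3 ∣ Fintype.card (ZMod p) - 1 := by rw [ZMod.card]; exact h3
  obtain ⟨χ, hord⟩ := MulChar.exists_mulChar_orderOf (ZMod p) (R := ℂ) hdvd
    (Complex.isPrimitiveRoot_exp 3 (by norm_num))
  have hχ3 : χ ^ 3 = 1 := by rw [← hord]; exact pow_orderOf_eq_one χ
  have hχ1 : χ ≠ 1 := by
    intro h; rw [h, orderOf_one] at hord; norm_num at hord
  have hχ2 : χ ^ 2 ≠ 1 := by
    intro h
    have := orderOf_dvd_of_pow_eq_one h
    rw [hord] at this
    norm_num at this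
  have hval3 : ∀ {x : ZMod p}, x ≠ 0 → χ x ^ 3 = 1 := by
    intro x hx
    rw [← MulChar.pow_apply' χ (by norm_num) x, hχ3,
      MulChar.one_apply (isUnit_iff_ne_zero.mpr hx)]
  have hneg1 : χ (-1) = 1 := by
    have hsq : χ (-1) ^ 2 = 1 := by
      rw [sq, ← map_mul, neg_one_mul, neg_neg, MulChar.map_one]
    have h3' : χ (-1) ^ 3 = 1 := hval3 (neg_ne_zero.mpr one_ne_zero)
    have h4 : χ (-1) = (χ (-1) ^ 2) ^ 2 := by linear_combination (-(χ (-1))) * h3'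
    rw [hsq, one_pow] at h4
    exact h4
  obtain ⟨g, hg⟩ := IsCyclic.exists_generator (α := (ZMod p)ˣ)
  have hfg_ne : χ.toUnitHom g ≠ 1 := by
    intro h
    apply hχ1
    rw [MulChar.eq_one_iff]
    intro a
    obtain ⟨k, hk⟩ := hg a
    rw [← hk, ← MulChar.coe_toUnitHom, map_zpow, h, one_zpow, Units.val_one]
  have hfg3 : χ.toUnitHom g ^ 3 = 1 := by
    apply Units.ext
    rw [Units.val_pow_eq_pow_val, MulChar.coe_toUnitHom, Units.val_one]
    exact hval3 (Units.ne_zero g)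
  have hordw : orderOf (χ.toUnitHom g) = 3 := orderOf_eq_prime hfg3 hfg_ne
  have hker : ∀ y : ZMod p, y ≠ 0 → χ y = 1 → ∃ x : ZMod p, x ^ 3 = y := by
    intro y hy hχy
    obtain ⟨u, hu⟩ := isUnit_iff_ne_zero.mpr hy
    obtain ⟨k, hk⟩ := hg u
    have hfu : χ.toUnitHom u = 1 := by
      apply Units.ext
      rw [MulChar.coe_toUnitHom, Units.val_one, hu]
      exact hχy
    rw [← hk, map_zpow] at hfu
    have hdk : (3:ℤ) ∣ k := by
      have hh := orderOf_dvd_iff_zpow_eq_one.mpr hfu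
      rw [hordw] at hh
      exact_mod_cast hh
    obtain ⟨j, hj⟩ := hdk
    refine ⟨((g ^ j : (ZMod p)ˣ) : ZMod p), ?_⟩
    rw [← Units.val_pow_eq_pow_val, ← hu, ← hk, hj]
    congr 1
    rw [← zpow_natCast, ← zpow_mul, mul_comm]
    norm_num
  have hcount3 : ∀ y : ZMod p, y ≠ 0 → (∃ x : ZMod p, x ^ 3 = y) →
      (Finset.univ.filter (fun a : ZMod p => a ^ 3 = y)).card = 3 := by
    obtain ⟨ω, hω⟩ := exists_prime_orderOf_dvd_card (G := (ZMod p)ˣ) 3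
      (by rw [Fintype.card_units, ZMod.card]; exact h3)
    have hωprim : IsPrimitiveRoot ((ω : ZMod p)) 3 := by
      rw [IsPrimitiveRoot.coe_units_iff, ← hω]
      exact IsPrimitiveRoot.orderOf ω
    intro y hy hex
    have hcard := hωprim.card_nthRoots y
    rw [if_pos hex] at hcard
    have hset : Finset.univ.filter (fun a : ZMod p => a ^ 3 = y)
        = (Polynomial.nthRoots 3 y).toFinset := by
      ext a
      simp [Polynomial.mem_nthRoots (by norm_num : 0 < 3)]
    rw [hset, Multiset.toFinset_card_of_nodup (hωprim.nthRoots_nodup hy), hcard]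
  have hcnt : ∀ y : ZMod p,
      (((Finset.univ.filter (fun a : ZMod p => a ^ 3 = y)).card : ℕ) : ℂ)
        = 1 + χ y + χ y ^ 2 := by
    intro y
    by_cases hy : y = 0
    · subst hy
      have hset : Finset.univ.filter (fun a : ZMod p => a ^ 3 = (0 : ZMod p)) = {0} := by
        ext a
        simp [pow_eq_zero_iff (by norm_num : (3:ℕ) ≠ 0)]
      rw [hset]
      simp [χ.map_zero]
    · by_cases hχy : χ y = 1
      · rw [hcount3 y hy (hker y hy hχy), hχy]
        norm_num
      · have hzero : 1 + χ y + χ y ^ 2 = 0 := by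
          have h30 := hval3 hy
          rcases mul_eq_zero.mp (show (χ y - 1) * (1 + χ y + χ y ^ 2) = 0 by
            linear_combination h30) with h | h
          · exact absurd (by linear_combination h) hχy
          · exact h
        rw [hzero]
        rw [Finset.filter_false_of_mem, Finset.card_empty, Nat.cast_zero]
        intro a _ h
        apply hχy
        have ha : a ≠ 0 := by
          rintro rfl
          rw [zero_pow (by norm_num)] at h
          exact hy h.symm
        rw [← h, map_pow, hval3 ha]
  have hexpand : ∀ m : ZMod p, T (0 : ZMod p) m
      = ∑ y : ZMod p, (1 + χ y + χ y ^ 2) * psi (m * y) := by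
    intro m
    rw [T]
    have h0 : ∀ a : ZMod p, psi (m * a ^ 3 + 0 * a) = psi (m * a ^ 3) := by
      intro a; rw [zero_mul, add_zero]
    simp_rw [h0]
    rw [← Finset.sum_fiberwise_of_maps_to (g := fun a : ZMod p => a ^ 3)
      (fun x _ => Finset.mem_univ _) (fun a => psi (m * a ^ 3))]
    refine Finset.sum_congr rfl fun y _ => ?_
    have hstep : ∑ a ∈ Finset.univ.filter (fun a : ZMod p => a ^ 3 = y), psi (m * a ^ 3)
        = (Finset.univ.filter (fun a : ZMod p => a ^ 3 = y)).card • psi (m * y) := by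
      refine (Finset.sum_congr rfl fun a ha => ?_).trans (Finset.sum_const _)
      rw [(Finset.mem_filter.mp ha).2]
    rw [hstep, nsmul_eq_mul, ← hcnt y]
  set A := gaussSum χ (ZMod.stdAddChar (N := p)) with hA
  set B := gaussSum (χ ^ 2) (ZMod.stdAddChar (N := p)) with hB
  have hAB : A * B = (p : ℂ) := by
    have h := gaussSum_mul_gaussSum_pow_orderOf_sub_one hχ1 hprim
    rw [hord] at h
    norm_num [hneg1] at h
    exact h
  have hsum0 : ∀ m : ZMod p, m ≠ 0 → ∑ y : ZMod p, psi (m * y) = 0 := by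
    intro m hm
    have h := sum_psi (p := p) m
    rw [if_neg hm] at h
    rw [← h]
    refine Finset.sum_congr rfl fun y _ => ?_
    rw [mul_comm]
  have hTm : ∀ m : ZMod p, m ≠ 0 → T (0 : ZMod p) m = χ m ^ 2 * A + χ m * B := by
    intro m hm
    have hu3 : χ m ^ 3 = 1 := hval3 hm
    have t1 : ∑ y : ZMod p, χ y * psi (m * y) = χ m ^ 2 * A := by
      have h := gaussSum_mulShift χ (ZMod.stdAddChar (N := p)) (Units.mk0 m hm)
      have hgs : gaussSum χ (AddChar.mulShift (ZMod.stdAddChar (N := p)) m)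
          = ∑ y : ZMod p, χ y * psi (m * y) := by
        rw [gaussSum]
        refine Finset.sum_congr rfl fun y _ => ?_
        rw [AddChar.mulShift_apply]
        rfl
      rw [Units.val_mk0, hgs] at h
      calc ∑ y : ZMod p, χ y * psi (m * y)
          = χ m ^ 2 * (χ m * ∑ y : ZMod p, χ y * psi (m * y)) := by
            rw [← mul_assoc, ← pow_succ]
            norm_num
            rw [hu3, one_mul]
        _ = χ m ^ 2 * A := by rw [h]
    have t2 : ∑ y : ZMod p, χ y ^ 2 * psi (m * y) = χ m * B := by
      have h := gaussSum_mulShift (χ ^ 2) (ZMod.stdAddChar (N := p)) (Units.mk0 m hm)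
      have hgs : gaussSum (χ ^ 2) (AddChar.mulShift (ZMod.stdAddChar (N := p)) m)
          = ∑ y : ZMod p, χ y ^ 2 * psi (m * y) := by
        rw [gaussSum]
        refine Finset.sum_congr rfl fun y _ => ?_
        rw [AddChar.mulShift_apply, MulChar.pow_apply' χ (by norm_num)]
        rfl
      rw [Units.val_mk0, hgs, MulChar.pow_apply' χ (by norm_num)] at h
      calc ∑ y : ZMod p, χ y ^ 2 * psi (m * y)
          = χ m * (χ m ^ 2 * ∑ y : ZMod p, χ y ^ 2 * psi (m * y)) := by
            rw [← mul_assoc, ← pow_succ']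
            rw [hu3, one_mul]
        _ = χ m * B := by rw [h]
    rw [hexpand m]
    have hsplit : ∀ y : ZMod p, (1 + χ y + χ y ^ 2) * psi (m * y)
        = psi (m * y) + χ y * psi (m * y) + χ y ^ 2 * psi (m * y) := by
      intro y; ring
    simp_rw [hsplit]
    rw [Finset.sum_add_distrib, Finset.sum_add_distrib, hsum0 m hm, t1, t2, zero_add]
  have hphi : ∀ m : ZMod p, m ≠ 0 → Φ (0 : ZMod p) m
      = χ m ^ 2 * (A ^ 4 + 4 * A * B ^ 3) + χ m * (B ^ 4 + 4 * A ^ 3 * B)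
        + 6 * (A * B) ^ 2 := by
    intro m hm
    have hm' : (-m) ≠ 0 := neg_ne_zero.mpr hm
    have hχneg : χ (-m) = χ m := by
      rw [show -m = -1 * m by ring, map_mul, hneg1, one_mul]
    have hu3 : χ m ^ 3 = 1 := hval3 hm
    rw [Φ, conj_T, neg_zero, hTm m hm, hTm (-m) hm', hχneg]
    linear_combination ((χ m)^2*A^4*((χ m)^3+1) + 4*(χ m)*A^3*B*((χ m)^3+1)
      + 6*A^2*B^2*((χ m)^3+1) + 4*(χ m)^2*A*B^3 + (χ m)*B^4) * hu3
  have hs1 : ∑ m ∈ Finset.univ.erase (0 : ZMod p), χ m = 0 := by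
    rw [Finset.sum_erase _ χ.map_zero]
    exact MulChar.sum_eq_zero_of_ne_one hχ1
  have hs2 : ∑ m ∈ Finset.univ.erase (0 : ZMod p), χ m ^ 2 = 0 := by
    have hpow : ∀ m : ZMod p, χ m ^ 2 = (χ ^ 2) m := fun m =>
      (MulChar.pow_apply' χ (by norm_num) m).symm
    simp_rw [hpow]
    rw [Finset.sum_erase _ (χ ^ 2).map_zero]
    exact MulChar.sum_eq_zero_of_ne_one hχ2
  have hphi00 : Φ (0 : ZMod p) 0 = (p : ℂ) ^ 4 := by
    rw [Φ, T_zero_right, if_pos rfl, map_natCast]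
    ring
  rw [V, ← Finset.add_sum_erase _ _ (Finset.mem_univ (0 : ZMod p)), hphi00,
    Finset.sum_congr rfl (fun m hm => hphi m (Finset.mem_erase.mp hm).1)]
  rw [Finset.sum_add_distrib, Finset.sum_add_distrib, ← Finset.sum_mul, ← Finset.sum_mul,
    hs1, hs2, Finset.sum_const, Finset.card_erase_of_mem (Finset.mem_univ 0),
    Finset.card_univ, ZMod.card, nsmul_eq_mul, hp_cast_sub_one]
  rw [show (A * B) ^ 2 = ((p:ℂ)) ^ 2 by rw [hAB]]
  push_cast
  ring

/-- The fourth moment over nonzero cubic coefficients, for any nonzero linear coefficient. -/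
lemma V_ne_zero (h2 : (2 : ZMod p) ≠ 0) (h3' : (3 : ZMod p) ≠ 0)
    (hV0 : V (0 : ZMod p) = (p : ℂ) ^ 4 + 6 * ((p:ℂ) - 1) * (p:ℂ) ^ 2)
    {ν : ZMod p} (hν : ν ≠ 0) : V ν = (p : ℂ) ^ 2 * (2 * p - 7) := by
  have key : ∑ u : ZMod p, V u = V (0 : ZMod p) + (p - 1 : ℂ) * V ν := by
    have hcon : ∀ u ∈ Finset.univ.erase (0 : ZMod p), V u = V ν := by
      intro u hu
      have hu0 : u ≠ 0 := (Finset.mem_erase.mp hu).1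
      have := V_scale (t := u * ν⁻¹) (mul_ne_zero hu0 (inv_ne_zero hν)) ν
      rwa [mul_assoc, inv_mul_cancel₀ hν, mul_one] at this
    have h1 : ∑ u ∈ Finset.univ.erase (0 : ZMod p), V u = (p - 1 : ℕ) • V ν := by
      rw [Finset.sum_congr rfl hcon, Finset.sum_const, Finset.card_erase_of_mem (Finset.mem_univ 0),
        Finset.card_univ, ZMod.card]
    rw [← Finset.add_sum_erase _ V (Finset.mem_univ 0), h1, nsmul_eq_mul, hp_cast_sub_one]
  have key2 : ∑ u : ZMod p, V u = (p : ℂ) ^ 4 + (p - 1) * (p ^ 2 * (2 * p - 1)) := by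
    have h0 : ∑ u : ZMod p, V u = ∑ m : ZMod p, ∑ u : ZMod p, Φ u m := Finset.sum_comm
    have h1 : ∑ m ∈ Finset.univ.erase (0 : ZMod p), ∑ u : ZMod p, Φ u m
        = (p - 1 : ℕ) • ((p : ℂ) ^ 2 * (2 * p - 1)) := by
      rw [Finset.sum_congr rfl (fun m hm => sum_u h2 h3' (Finset.mem_erase.mp hm).1),
        Finset.sum_const, Finset.card_erase_of_mem (Finset.mem_univ 0), Finset.card_univ,
        ZMod.card]
    rw [h0, ← Finset.add_sum_erase _ _ (Finset.mem_univ (0 : ZMod p)), sum_phi_zero_right, h1,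
      nsmul_eq_mul, hp_cast_sub_one]
  have hp1 : (p : ℂ) - 1 ≠ 0 := by
    have h1 : (1:ℕ) < p := (Fact.out : p.Prime).one_lt
    intro h
    have : (p : ℂ) = 1 := by linear_combination h
    exact_mod_cast (by omega : ¬ (p = 1)) (by exact_mod_cast this)
  have heq := key.symm.trans key2
  rw [hV0] at heq
  apply mul_left_cancel₀ hp1
  linear_combination heq

lemma sum_range_cast (f : ZMod p → ℂ) :
    ∑ a ∈ Finset.range p, f ((a : ℕ) : ZMod p) = ∑ x : ZMod p, f x := by
  apply Finset.sum_nbij' (fun a => ((a : ℕ) : ZMod p)) (fun x => x.val)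
  · intro a _; exact Finset.mem_univ _
  · intro x _; exact Finset.mem_range.mpr (ZMod.val_lt x)
  · intro a ha; exact ZMod.val_cast_of_lt (Finset.mem_range.mp ha)
  · intro x _; exact ZMod.natCast_zmod_val x
  · intro a _; rfl

lemma abs_pow4 (z : ℂ) : ((‖z‖ ^ 4 : ℝ) : ℂ) = (z * (starRingEnd ℂ) z) ^ 2 := by
  rw [Complex.mul_conj, Complex.normSq_eq_norm_sq]
  push_cast
  ring

lemma term_eq (n : ℤ) (m a : ℕ) :
    Complex.exp (2 * Real.pi * Complex.I * ((m : ℂ) * (a : ℂ) ^ 3 + (n : ℂ) * (a : ℂ)) / p)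
      = psi ((m : ZMod p) * ((a : ZMod p)) ^ 3 + (n : ZMod p) * (a : ZMod p)) := by
  have h1 : ((m : ZMod p) * ((a : ZMod p)) ^ 3 + (n : ZMod p) * (a : ZMod p))
      = (((m * a ^ 3 + n * a : ℤ) : ZMod p)) := by push_cast; ring
  rw [h1]
  show _ = ZMod.stdAddChar _
  rw [ZMod.stdAddChar_coe]
  congr 1
  push_cast
  ring

lemma inner_sum_eq (n : ℤ) (m : ℕ) :
    ∑ a ∈ Finset.range p, Complex.exp
        (2 * Real.pi * Complex.I * ((m : ℂ) * (a : ℂ) ^ 3 + (n : ℂ) * (a : ℂ)) / p)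
      = T ((n : ZMod p)) ((m : ZMod p)) := by
  rw [T, ← sum_range_cast (fun x => psi ((m : ZMod p) * x ^ 3 + (n : ZMod p) * x))]
  exact Finset.sum_congr rfl fun a _ => term_eq n m a

end Stmt7

open Stmt7

theorem stmt7 (p : ℕ) (hp : p.Prime) (n : ℤ) (hn : ¬ (p : ℤ) ∣ n) (hodd : Odd p) (h3 : 3 ∣ (p - 1)) :
    ∑ m ∈ Finset.Icc 1 (p - 1),
      ‖∑ a ∈ Finset.range p, Complex.exp (2 * Real.pi * Complex.I * ((m : ℂ) * (a : ℂ) ^ 3 + (n : ℂ) * (a : ℂ)) / p)‖ ^ 4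
    = 2 * (p : ℝ) ^ 3 - 7 * (p : ℝ) ^ 2 := by
  haveI : Fact p.Prime := ⟨hp⟩
  have hp2 : p ≠ 2 := by rintro rfl; exact (Nat.not_odd_iff_even.mpr (by norm_num)) hodd
  have hp3 : p ≠ 3 := by rintro rfl; omega
  have h2z : (2 : ZMod p) ≠ 0 := by
    intro h
    have hdd : p ∣ 2 := (ZMod.natCast_eq_zero_iff 2 p).mp (by exact_mod_cast h)
    exact hp2 ((Nat.prime_dvd_prime_iff_eq hp (by norm_num)).mp hdd)
  have h3z : (3 : ZMod p) ≠ 0 := by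
    intro h
    have hdd : p ∣ 3 := (ZMod.natCast_eq_zero_iff 3 p).mp (by exact_mod_cast h)
    exact hp3 ((Nat.prime_dvd_prime_iff_eq hp (by norm_num)).mp hdd)
  have hν : ((n : ZMod p)) ≠ 0 := by
    rw [Ne, ZMod.intCast_zmod_eq_zero_iff_dvd]
    exact hn
  have hVν : V ((n : ZMod p)) = (p:ℂ)^2 * (2*(p:ℂ) - 7) := V_ne_zero h2z h3z (V_zero h3) hν
  apply Complex.ofReal_injective
  rw [Complex.ofReal_sum]
  have hterm : ∀ m : ℕ, ((‖∑ a ∈ Finset.range p, Complex.exp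
      (2 * Real.pi * Complex.I * ((m : ℂ) * (a : ℂ) ^ 3 + (n : ℂ) * (a : ℂ)) / p)‖ ^ 4 : ℝ) : ℂ)
      = Φ ((n : ZMod p)) ((m : ZMod p)) := by
    intro m
    rw [abs_pow4, inner_sum_eq n m, Φ]
  rw [Finset.sum_congr rfl (fun m _ => hterm m)]
  have hIcc : Finset.Icc 1 (p - 1) = (Finset.range p).erase 0 := by
    ext x
    simp only [Finset.mem_Icc, Finset.mem_erase, Finset.mem_range]
    have := hp.one_lt
    omega
  have hzero : Φ ((n : ZMod p)) (((0:ℕ) : ZMod p)) = 0 := by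
    rw [Nat.cast_zero, Φ, T_zero_right, if_neg hν]
    simp
  have herase : ∑ m ∈ (Finset.range p).erase 0, Φ ((n:ZMod p)) ((m:ZMod p))
      = ∑ m ∈ Finset.range p, Φ ((n:ZMod p)) ((m:ZMod p)) :=
    Finset.sum_erase _ hzero
  rw [hIcc, herase, sum_range_cast (fun x => Φ ((n:ZMod p)) x)]
  rw [show ∑ x : ZMod p, Φ ((n:ZMod p)) x = V ((n:ZMod p)) from rfl, hVν]
  push_cast
  ring
end

section
/- Let p be a prime with p ≡ 5 (mod 6), and let n be an integer with p ∤ n. Then ∑_{m=1}^{p-1} |∑_{a=0}^{p-1} e((m a³ + n a)/p)|⁶ = 5p³(p − 1). -/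
open Finset Complex Real

namespace Stmt9Aux

noncomputable def E (p : ℕ) (z : ℤ) : ℂ := Complex.exp (2 * Real.pi * Complex.I * (z : ℂ) / p)

lemma E_add (p : ℕ) (a b : ℤ) : E p (a + b) = E p a * E p b := by
  rw [E, E, E, ← Complex.exp_add]; congr 1; push_cast; ring

lemma E_zero (p : ℕ) : E p 0 = 1 := by simp [E]

lemma E_congr {p : ℕ} (hp : p ≠ 0) {a b : ℤ} (h : (p:ℤ) ∣ a - b) : E p a = E p b := by
  obtain ⟨k, hk⟩ := h
  have hpc : (p:ℂ) ≠ 0 := Nat.cast_ne_zero.mpr hp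
  have ha : a = b + p * k := by linarith
  subst ha
  rw [E_add]
  have h1 : E p ((p:ℤ) * k) = 1 := by
    rw [E, Complex.exp_eq_one_iff]
    exact ⟨k, by push_cast; field_simp⟩
  rw [h1, mul_one]

variable {p : ℕ}

noncomputable def eK (x : ZMod p) : ℂ := E p (x.val : ℤ)

lemma val_cast [NeZero p] (x : ZMod p) : ((x.val : ℕ) : ZMod p) = x :=
  ZMod.natCast_rightInverse x

lemma eK_int [NeZero p] (z : ℤ) : eK (z : ZMod p) = E p z := by
  apply E_congr (NeZero.ne p)
  have : ((((z : ZMod p).val : ℤ) - z : ℤ) : ZMod p) = 0 := by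
    push_cast
    rw [val_cast ((z : ℤ) : ZMod p)]
    ring
  exact (ZMod.intCast_zmod_eq_zero_iff_dvd _ p).mp this

lemma eK_nat [NeZero p] (a : ℕ) : eK (a : ZMod p) = E p a := by
  have : ((a : ℤ) : ZMod p) = (a : ZMod p) := by push_cast; rfl
  rw [← this, eK_int]

lemma eK_add [NeZero p] (x y : ZMod p) : eK (x + y) = eK x * eK y := by
  have h1 : eK (x + y) = E p ((x.val : ℤ) + (y.val : ℤ)) := by
    have h2 : ((x + y : ZMod p)) = (((x.val : ℤ) + (y.val : ℤ) : ℤ) : ZMod p) := by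
      push_cast
      rw [val_cast x, val_cast y]
    rw [h2, eK_int]
  rw [h1, E_add]
  rfl

lemma eK_zero [NeZero p] : eK (0 : ZMod p) = 1 := by
  rw [eK, ZMod.val_zero]
  exact E_zero p

lemma eK_conj [NeZero p] (x : ZMod p) : (starRingEnd ℂ) (eK x) = eK (-x) := by
  have h1 : (starRingEnd ℂ) (eK x) = E p (-(x.val : ℤ)) := by
    rw [eK, E, E, ← Complex.exp_conj]
    congr 1
    rw [map_div₀]
    simp only [map_mul, Complex.conj_I, Complex.conj_ofReal, map_natCast, map_ofNat,
      map_intCast]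
    push_cast
    ring
  rw [h1]
  have : ((-(x.val : ℤ) : ℤ) : ZMod p) = -x := by
    push_cast
    rw [val_cast x]
  rw [← this, eK_int]

lemma sum_range_cast [NeZero p] (f : ZMod p → ℂ) :
    ∑ a ∈ Finset.range p, f (a : ZMod p) = ∑ x : ZMod p, f x :=
  Finset.sum_nbij' (fun a => (a : ZMod p)) (fun x => x.val)
    (fun _ _ => Finset.mem_univ _)
    (fun x _ => Finset.mem_range.mpr (ZMod.val_lt x))
    (fun a ha => ZMod.val_natCast_of_lt (Finset.mem_range.mp ha))
    (fun x _ => ZMod.natCast_rightInverse x)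
    (fun _ _ => rfl)

lemma sum_eK_univ [NeZero p] (hp : 2 ≤ p) : ∑ x : ZMod p, (eK x : ℂ) = 0 := by
  rw [← sum_range_cast (fun x => eK x)]
  have hpc : (p:ℂ) ≠ 0 := Nat.cast_ne_zero.mpr (by omega)
  have hz : ∀ a ∈ Finset.range p, eK (a : ZMod p) = Complex.exp (2 * Real.pi * Complex.I / p) ^ a := by
    intro a _
    rw [eK_nat, E, ← Complex.exp_nat_mul]
    congr 1
    push_cast
    ring
  rw [Finset.sum_congr rfl hz]
  have hne : Complex.exp (2 * Real.pi * Complex.I / p) ≠ 1 := by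
    intro hone
    obtain ⟨k, hk⟩ := Complex.exp_eq_one_iff.mp hone
    have hππ : (2 * (Real.pi:ℂ) * Complex.I) ≠ 0 := by
      simp [Real.pi_ne_zero, Complex.I_ne_zero, Complex.ofReal_ne_zero]
    have h2 : (2 * (Real.pi:ℂ) * Complex.I) * 1 = (2 * (Real.pi:ℂ) * Complex.I) * (k * p) := by
      field_simp at hk
      linear_combination (2 * (Real.pi:ℂ) * Complex.I) * hk
    have h3 : ((1:ℤ) : ℂ) = ((k * p : ℤ) : ℂ) := by
      have := mul_left_cancel₀ hππ h2
      push_cast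
      linear_combination this
    have h4 : (1:ℤ) = k * p := Int.cast_injective h3
    have h5 : (p:ℤ) ∣ 1 := ⟨k, by linarith⟩
    have := Int.le_of_dvd one_pos h5
    omega
  rw [geom_sum_eq hne]
  have hp1 : Complex.exp (2 * Real.pi * Complex.I / p) ^ p = 1 := by
    rw [← Complex.exp_nat_mul, Complex.exp_eq_one_iff]
    exact ⟨1, by field_simp; norm_num⟩
  rw [hp1]
  simp

lemma sum_eK_mul [Fact p.Prime] (c : ZMod p) :
    ∑ x : ZMod p, eK (c * x) = if c = 0 then (p:ℂ) else 0 := by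
  have hp : 2 ≤ p := (Fact.out (p := p.Prime)).two_le
  by_cases hc : c = 0
  · subst hc
    simp only [zero_mul, if_true, eK_zero, Finset.sum_const, Finset.card_univ, ZMod.card,
      nsmul_eq_mul, mul_one]
  · rw [if_neg hc]
    have hbij : Function.Bijective (fun x : ZMod p => c * x) := mulLeft_bijective₀ c hc
    rw [Function.Bijective.sum_comp hbij (fun y => eK y)]
    exact sum_eK_univ hp


variable {p : ℕ} [Fact p.Prime]

omit [Fact p.Prime] in
lemma p_ge5 (hmod : p % 6 = 5) : 5 ≤ p := by omega

lemma natCast_ne_zero' (hmod : p % 6 = 5) {k : ℕ} (hk : 0 < k) (hk6 : k < 5) :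
    (k : ZMod p) ≠ 0 := by
  intro h
  have hdvd : p ∣ k := (ZMod.natCast_eq_zero_iff k p).mp h
  have := Nat.le_of_dvd hk hdvd
  omega

lemma two_ne (hmod : p % 6 = 5) : (2 : ZMod p) ≠ 0 := by
  have := natCast_ne_zero' (p := p) hmod (k := 2) (by norm_num) (by norm_num)
  simpa using this

lemma three_ne (hmod : p % 6 = 5) : (3 : ZMod p) ≠ 0 := by
  have := natCast_ne_zero' (p := p) hmod (k := 3) (by norm_num) (by norm_num)
  simpa using this

lemma cube_bij (hmod : p % 6 = 5) : Function.Bijective (fun x : ZMod p => x ^ 3) := by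
  rw [Finite.injective_iff_bijective.symm]
  intro a b h
  simp only at h
  by_cases hb : b = 0
  · subst hb
    simpa [pow_eq_zero_iff] using h
  · have ha : a ≠ 0 := by
      intro ha; rw [ha] at h; exact hb (by simpa [pow_eq_zero_iff] using h.symm)
    set c := a / b with hc
    have hc0 : c ≠ 0 := div_ne_zero ha hb
    have hc3 : c ^ 3 = 1 := by
      rw [hc, div_pow, h, div_self (pow_ne_zero 3 hb)]
    have h1 : orderOf c ∣ 3 := orderOf_dvd_of_pow_eq_one hc3
    have h2 : orderOf c ∣ p - 1 := orderOf_dvd_of_pow_eq_one (ZMod.pow_card_sub_one_eq_one hc0)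
    have hcop : Nat.Coprime 3 (p - 1) := by
      rw [Nat.Prime.coprime_iff_not_dvd (by norm_num)]
      rintro ⟨k, hk⟩
      omega
    have : orderOf c ∣ 1 := hcop ▸ Nat.dvd_gcd h1 h2
    have hc1 : c = 1 := orderOf_eq_one_iff.mp (Nat.dvd_one.mp this)
    rwa [hc, div_eq_one_iff_eq hb] at hc1

lemma sum_one : ∑ _x : ZMod p, (1:ℂ) = (p:ℂ) := by
  simp [Finset.card_univ, ZMod.card]

lemma sum_ite_one (c : ZMod p) : ∑ x : ZMod p, (if x = c then (1:ℂ) else 0) = 1 := by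
  simp

lemma lincount (a d : ZMod p) :
    ∑ x : ZMod p, (if x * a = d then (1:ℂ) else 0)
      = if a = 0 then (if d = 0 then (p:ℂ) else 0) else 1 := by
  by_cases ha : a = 0
  · subst ha
    simp only [mul_zero, if_true]
    by_cases hd : d = 0
    · subst hd; simp [sum_one, eq_comm]
    · simp [hd, Ne.symm hd, eq_comm]
  · rw [if_neg ha]
    have key : ∀ x : ZMod p, (x * a = d) = (x = d * a⁻¹) := by
      intro x
      apply propext
      constructor
      · intro h; field_simp [← h]; exact h
      · intro h; subst h; field_simp
    simp_rw [key]
    exact sum_ite_one _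

lemma cube_count (hmod : p % 6 = 5) (c : ZMod p) :
    ∑ w : ZMod p, (if w ^ 3 = c then (1:ℂ) else 0) = 1 := by
  rw [Function.Bijective.sum_comp (cube_bij hmod) (fun y => if y = c then (1:ℂ) else 0)]
  exact sum_ite_one c


lemma sum_ite_zero_else (A : ℂ) :
    ∑ u : ZMod p, (if u = 0 then A else 1) = A + ((p:ℂ) - 1) := by
  have h : ∀ u : ZMod p, (if u = 0 then A else 1) = (if u = 0 then A - 1 else 0) + 1 := by
    intro u; by_cases h : u = 0 <;> simp [h]
  simp_rw [h, Finset.sum_add_distrib, sum_one]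
  rw [Finset.sum_ite_eq' Finset.univ (0 : ZMod p) (fun _ => A - 1)]
  simp; ring

-- Z2
lemma Z2count : ∑ y : ZMod p, ∑ z : ZMod p, (if y * z = 0 then (1:ℂ) else 0)
    = 2 * (p:ℂ) - 1 := by
  have h1 : ∀ y : ZMod p, ∑ z : ZMod p, (if y * z = 0 then (1:ℂ) else 0)
      = if y = 0 then (p:ℂ) else 1 := by
    intro y
    have : ∀ z : ZMod p, (y * z = 0) = (z * y = 0) := by intro z; rw [mul_comm]
    simp_rw [this, lincount y 0]
    simp
  simp_rw [h1, sum_ite_zero_else]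
  ring

lemma Dcount : ∑ y : ZMod p, ∑ z : ZMod p, ∑ u : ZMod p, ∑ v : ZMod p,
      (if y * z - u * v = 0 then (1:ℂ) else 0)
    = (p:ℂ) * (2 * p - 1) + (p:ℂ)^2 * (p - 1) := by
  have h1 : ∀ y z u : ZMod p, ∑ v : ZMod p, (if y * z - u * v = 0 then (1:ℂ) else 0)
      = if u = 0 then (if y * z = 0 then (p:ℂ) else 0) else 1 := by
    intro y z u
    have : ∀ v : ZMod p, (y * z - u * v = 0) = (v * u = y * z) := by
      intro v; apply propext; constructor
      · intro h; linear_combination -h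
      · intro h; linear_combination -h
    simp_rw [this, lincount u (y * z)]
  have h2 : ∀ y z : ZMod p, ∑ u : ZMod p, ∑ v : ZMod p, (if y * z - u * v = 0 then (1:ℂ) else 0)
      = (if y * z = 0 then (p:ℂ) else 0) + ((p:ℂ) - 1) := by
    intro y z
    simp_rw [h1 y z]
    exact sum_ite_zero_else _
  simp_rw [h2]
  simp only [Finset.sum_add_distrib, sum_one]
  have h3 : ∀ y : ZMod p, ∑ z : ZMod p, (if y * z = 0 then (p:ℂ) else 0)
      = (p:ℂ) * ∑ z : ZMod p, (if y * z = 0 then (1:ℂ) else 0) := by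
    intro y
    rw [Finset.mul_sum]
    congr 1; ext z
    by_cases h : y * z = 0 <;> simp [h]
  simp_rw [h3, ← Finset.mul_sum, Z2count]
  simp only [Finset.sum_const, Finset.card_univ, ZMod.card, nsmul_eq_mul]
  ring

lemma inner_u (y z u : ZMod p) :
    (¬ u * (y + z - u) = 0 ∧ y * z = u * (y + z - u)) ↔ ((u = y ∨ u = z) ∧ ¬ y * z = 0) := by
  constructor
  · rintro ⟨hne, heq⟩
    refine ⟨?_, by rw [heq]; exact hne⟩
    have h0 : (u - y) * (u - z) = 0 := by linear_combination heq
    rcases mul_eq_zero.mp h0 with h | h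
    · left; linear_combination h
    · right; linear_combination h
  · rintro ⟨hor, hnz⟩
    have heq : y * z = u * (y + z - u) := by rcases hor with h | h <;> subst h <;> ring
    exact ⟨by rw [← heq]; exact hnz, heq⟩

lemma sum_or (y z : ZMod p) :
    ∑ u : ZMod p, (if u = y ∨ u = z then (1:ℂ) else 0)
      = 2 - (if y = z then (1:ℂ) else 0) := by
  by_cases hyz : y = z
  · subst hyz
    simp_rw [or_self]
    rw [sum_ite_one y]
    norm_num
  · have h : ∀ u : ZMod p, (if u = y ∨ u = z then (1:ℂ) else 0)
        = (if u = y then (1:ℂ) else 0) + (if u = z then (1:ℂ) else 0) := by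
      intro u
      by_cases h1 : u = y <;> by_cases h2 : u = z <;> simp_all
    simp_rw [h, Finset.sum_add_distrib, sum_ite_one]
    simp [hyz]
    norm_num

lemma G2count :
    ∑ y : ZMod p, ∑ z : ZMod p, ∑ u : ZMod p, ∑ v : ZMod p,
      (if (¬ u * v = 0 ∧ y * z = u * v ∧ v = y + z - u) then (1:ℂ) else 0)
    = ((p:ℂ) - 1) * (2 * p - 3) := by
  have hv : ∀ y z u : ZMod p,
      ∑ v : ZMod p, (if (¬ u * v = 0 ∧ y * z = u * v ∧ v = y + z - u) then (1:ℂ) else 0)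
      = if (¬ u * (y + z - u) = 0 ∧ y * z = u * (y + z - u)) then (1:ℂ) else 0 := by
    intro y z u
    have h : ∀ v : ZMod p, (¬ u * v = 0 ∧ y * z = u * v ∧ v = y + z - u)
        = (v = y + z - u ∧ (¬ u * v = 0 ∧ y * z = u * v)) := by
      intro v; apply propext; tauto
    simp_rw [h, ite_and]
    rw [Finset.sum_ite_eq' Finset.univ (y + z - u)
      (fun v => if ¬ u * v = 0 then (if y * z = u * v then (1:ℂ) else 0) else 0)]
    simp [ite_and]
  have hu : ∀ y z : ZMod p,
      ∑ u : ZMod p, (if (¬ u * (y + z - u) = 0 ∧ y * z = u * (y + z - u)) then (1:ℂ) else 0)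
      = if y * z = 0 then 0 else (2 - (if y = z then (1:ℂ) else 0)) := by
    intro y z
    simp_rw [inner_u]
    by_cases hq : y * z = 0
    · simp [hq]
    · simp_rw [if_neg hq]
      have h : ∀ u : ZMod p, (if (u = y ∨ u = z) ∧ ¬ y * z = 0 then (1:ℂ) else 0)
          = if u = y ∨ u = z then (1:ℂ) else 0 := by
        intro u; simp [hq]
      simp_rw [h]
      exact sum_or y z
  simp_rw [hv, hu]
  have hz : ∀ y : ZMod p,
      ∑ z : ZMod p, (if y * z = 0 then (0:ℂ) else (2 - (if y = z then (1:ℂ) else 0)))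
      = if y = 0 then 0 else (2*(p:ℂ) - 3) := by
    intro y
    have h : ∀ z : ZMod p, (if y * z = 0 then (0:ℂ) else (2 - (if y = z then (1:ℂ) else 0)))
        = (2 - 2 * (if y * z = 0 then (1:ℂ) else 0)) - (if z = y ∧ ¬ y * z = 0 then (1:ℂ) else 0) := by
      intro z
      by_cases h1 : y * z = 0
      · simp [h1]
      · by_cases h2 : z = y
        · subst h2
          simp [h1]
        · have h2' : ¬ y = z := fun hh => h2 hh.symm
          simp [h1, h2, h2']
    simp_rw [h]
    rw [Finset.sum_sub_distrib, Finset.sum_sub_distrib]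
    have e1 : ∑ _z : ZMod p, (2:ℂ) = 2 * p := by
      simp [Finset.sum_const, Finset.card_univ, ZMod.card]; ring
    have e2 : ∑ z : ZMod p, (2 * if y * z = 0 then (1:ℂ) else 0)
        = 2 * (if y = 0 then (p:ℂ) else 1) := by
      rw [← Finset.mul_sum]
      congr 1
      have : ∀ z : ZMod p, (y * z = 0) = (z * y = 0) := by intro z; rw [mul_comm]
      simp_rw [this, lincount y 0]
      simp
    have e3 : ∑ z : ZMod p, (if z = y ∧ ¬ y * z = 0 then (1:ℂ) else 0)
        = if y = 0 then (0:ℂ) else 1 := by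
      simp_rw [ite_and]
      rw [Finset.sum_ite_eq' Finset.univ y (fun z => if ¬ y * z = 0 then (1:ℂ) else 0)]
      simp only [Finset.mem_univ, if_true]
      by_cases h : y = 0
      · simp [h]
      · simp [h, mul_ne_zero h h]
    rw [e1, e2, e3]
    by_cases hy : y = 0 <;> simp [hy] <;> ring
  simp_rw [hz]
  have h : ∀ y : ZMod p, (if y = 0 then (0:ℂ) else (2*(p:ℂ)-3))
      = (2*(p:ℂ)-3) * (if y = 0 then 0 else 1) := by
    intro y; by_cases hy : y = 0 <;> simp [hy]
  simp_rw [h, ← Finset.mul_sum]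
  have h2 : ∀ y : ZMod p, (if y = 0 then (0:ℂ) else 1) = (if y = 0 then (0:ℂ) else 1) := fun _ => rfl
  rw [show (∑ y : ZMod p, if y = 0 then (0:ℂ) else 1) = 0 + ((p:ℂ)-1) from sum_ite_zero_else 0]
  ring


lemma G1count :
    ∑ y : ZMod p, ∑ z : ZMod p, ∑ u : ZMod p, ∑ v : ZMod p,
      ((if u * v = 0 then (1:ℂ) else 0) * (if y * z = 0 then (1:ℂ) else 0))
    = (2 * (p:ℂ) - 1) ^ 2 := by
  have h : ∀ y z : ZMod p,
      ∑ u : ZMod p, ∑ v : ZMod p,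
        ((if u * v = 0 then (1:ℂ) else 0) * (if y * z = 0 then (1:ℂ) else 0))
      = (2 * (p:ℂ) - 1) * (if y * z = 0 then (1:ℂ) else 0) := by
    intro y z
    simp_rw [← Finset.sum_mul]
    rw [Z2count]
  simp_rw [h, ← Finset.mul_sum, Z2count]
  ring

lemma Gcount :
    ∑ y : ZMod p, ∑ z : ZMod p, ∑ u : ZMod p, ∑ v : ZMod p,
      (if (y * z = u * v ∧ u * v * (y + z - u - v) = 0) then (1:ℂ) else 0)
    = (2 * (p:ℂ) - 1) ^ 2 + ((p:ℂ) - 1) * (2 * p - 3) := by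
  have hsplit : ∀ y z u v : ZMod p,
      (if (y * z = u * v ∧ u * v * (y + z - u - v) = 0) then (1:ℂ) else 0)
      = (if u * v = 0 then (1:ℂ) else 0) * (if y * z = 0 then (1:ℂ) else 0)
        + (if (¬ u * v = 0 ∧ y * z = u * v ∧ v = y + z - u) then (1:ℂ) else 0) := by
    intro y z u v
    by_cases huv : u * v = 0
    · have h1 : (y * z = u * v ∧ u * v * (y + z - u - v) = 0) ↔ (y * z = 0) := by
        rw [huv]; simp
      rw [if_pos huv, one_mul]
      have hfalse : ¬ (¬ u * v = 0 ∧ y * z = u * v ∧ v = y + z - u) := fun hh => hh.1 huv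
      rw [if_neg hfalse, add_zero]
      by_cases h2 : y * z = 0
      · rw [if_pos (h1.mpr h2), if_pos h2]
      · rw [if_neg (fun hh => h2 (h1.mp hh)), if_neg h2]
    · have h1 : (y * z = u * v ∧ u * v * (y + z - u - v) = 0)
          ↔ (¬ u * v = 0 ∧ y * z = u * v ∧ v = y + z - u) := by
        constructor
        · rintro ⟨ha, hb⟩
          rcases mul_eq_zero.mp hb with hc | hc
          · exact absurd hc huv
          · exact ⟨huv, ha, by linear_combination -hc⟩
        · rintro ⟨_, ha, hb⟩
          exact ⟨ha, by rw [hb]; ring⟩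
      rw [if_neg huv, zero_mul, zero_add]
      by_cases h2 : y * z = u * v ∧ u * v * (y + z - u - v) = 0
      · rw [if_pos h2, if_pos (h1.mp h2)]
      · rw [if_neg h2, if_neg (fun hh => h2 (h1.mpr hh))]
  simp_rw [hsplit, Finset.sum_add_distrib, G1count, G2count]

lemma countN3 :
    ∑ y : ZMod p, ∑ z : ZMod p, ∑ u : ZMod p, ∑ v : ZMod p, ∑ x : ZMod p, ∑ w : ZMod p,
      (if (x + y + z = u + v + w ∧ x * y * z = u * v * w) then (1:ℂ) else 0)
    = (p:ℂ)^4 + 5 * p * ((p:ℂ) - 1)^2 := by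
  have hw : ∀ y z u v x : ZMod p,
      ∑ w : ZMod p, (if (x + y + z = u + v + w ∧ x * y * z = u * v * w) then (1:ℂ) else 0)
      = if x * y * z = u * v * (x + y + z - u - v) then (1:ℂ) else 0 := by
    intro y z u v x
    have h : ∀ w : ZMod p, (x + y + z = u + v + w ∧ x * y * z = u * v * w)
        = (w = x + y + z - u - v ∧ x * y * z = u * v * w) := by
      intro w; apply propext
      constructor
      · rintro ⟨h1, h2⟩; exact ⟨by linear_combination -h1, h2⟩
      · rintro ⟨h1, h2⟩; exact ⟨by linear_combination -h1, h2⟩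
    simp_rw [h, ite_and]
    rw [Finset.sum_ite_eq' Finset.univ (x + y + z - u - v)
      (fun w => if x * y * z = u * v * w then (1:ℂ) else 0)]
    simp
  have hx : ∀ y z u v : ZMod p,
      ∑ x : ZMod p, (if x * y * z = u * v * (x + y + z - u - v) then (1:ℂ) else 0)
      = if y * z - u * v = 0 then (if u * v * (y + z - u - v) = 0 then (p:ℂ) else 0) else 1 := by
    intro y z u v
    have h : ∀ x : ZMod p, (x * y * z = u * v * (x + y + z - u - v))
        = (x * (y * z - u * v) = u * v * (y + z - u - v)) := by
      intro x; apply propext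
      constructor
      · intro h1; linear_combination h1
      · intro h1; linear_combination h1
    simp_rw [h, lincount (y * z - u * v) (u * v * (y + z - u - v))]
  have hpoint : ∀ y z u v : ZMod p,
      (if y * z - u * v = 0 then (if u * v * (y + z - u - v) = 0 then (p:ℂ) else 0) else 1)
      = 1 - (if y * z - u * v = 0 then (1:ℂ) else 0)
        + (p:ℂ) * (if (y * z = u * v ∧ u * v * (y + z - u - v) = 0) then (1:ℂ) else 0) := by
    intro y z u v
    by_cases h1 : y * z - u * v = 0
    · have h1' : y * z = u * v := by linear_combination h1
      by_cases h2 : u * v * (y + z - u - v) = 0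
      · simp [h1, h1', h2]
      · simp [h1, h1', h2]
    · have h1' : ¬ (y * z = u * v) := fun hh => h1 (by linear_combination hh)
      simp [h1, h1']
  calc ∑ y : ZMod p, ∑ z : ZMod p, ∑ u : ZMod p, ∑ v : ZMod p, ∑ x : ZMod p, ∑ w : ZMod p,
      (if (x + y + z = u + v + w ∧ x * y * z = u * v * w) then (1:ℂ) else 0)
      = ∑ y : ZMod p, ∑ z : ZMod p, ∑ u : ZMod p, ∑ v : ZMod p,
          (1 - (if y * z - u * v = 0 then (1:ℂ) else 0)
            + (p:ℂ) * (if (y * z = u * v ∧ u * v * (y + z - u - v) = 0) then (1:ℂ) else 0)) := by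
        simp_rw [hw, hx, hpoint]
    _ = (p:ℂ)^4 + 5 * p * ((p:ℂ) - 1)^2 := by
        simp_rw [Finset.sum_add_distrib, Finset.sum_sub_distrib, ← Finset.mul_sum]
        rw [Dcount, Gcount]
        simp only [Finset.sum_const, Finset.card_univ, ZMod.card, nsmul_eq_mul, mul_one]
        push_cast
        ring




def triEquiv (p : ℕ) [Fact p.Prime] (h2 : (2 : ZMod p) ≠ 0) :
    (ZMod p × ZMod p × ZMod p) ≃ (ZMod p × ZMod p × ZMod p) where
  toFun t := (t.2.1 + t.2.2, t.2.2 + t.1, t.1 + t.2.1)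
  invFun t := ((2:ZMod p)⁻¹ * (t.2.1 + t.2.2 - t.1), (2:ZMod p)⁻¹ * (t.1 + t.2.2 - t.2.1),
    (2:ZMod p)⁻¹ * (t.1 + t.2.1 - t.2.2))
  left_inv := by
    rintro ⟨x, y, z⟩
    simp only [Prod.mk.injEq]
    refine ⟨?_, ?_, ?_⟩ <;> field_simp <;> ring
  right_inv := by
    rintro ⟨a, b, c⟩
    simp only [Prod.mk.injEq]
    refine ⟨?_, ?_, ?_⟩ <;> field_simp <;> ring

lemma reindexT (h2 : (2 : ZMod p) ≠ 0) (f : ZMod p → ZMod p → ZMod p → ℂ) :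
    ∑ x : ZMod p, ∑ y : ZMod p, ∑ z : ZMod p, f (y + z) (z + x) (x + y)
      = ∑ x : ZMod p, ∑ y : ZMod p, ∑ z : ZMod p, f x y z := by
  have h1 : ∑ x : ZMod p, ∑ y : ZMod p, ∑ z : ZMod p, f (y + z) (z + x) (x + y)
      = ∑ t : ZMod p × ZMod p × ZMod p, f (t.2.1 + t.2.2) (t.2.2 + t.1) (t.1 + t.2.1) := by
    rw [Fintype.sum_prod_type]
    apply Finset.sum_congr rfl; intro x _
    rw [Fintype.sum_prod_type]
  have h3 : ∑ x : ZMod p, ∑ y : ZMod p, ∑ z : ZMod p, f x y z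
      = ∑ t : ZMod p × ZMod p × ZMod p, f t.1 t.2.1 t.2.2 := by
    rw [Fintype.sum_prod_type]
    apply Finset.sum_congr rfl; intro x _
    rw [Fintype.sum_prod_type]
  rw [h1, h3, ← Equiv.sum_comp (triEquiv p h2) (fun t => f t.1 t.2.1 t.2.2)]
  rfl

lemma reorder6 (g : ZMod p → ZMod p → ZMod p → ZMod p → ZMod p → ZMod p → ℂ) :
    ∑ x : ZMod p, ∑ y : ZMod p, ∑ z : ZMod p, ∑ u : ZMod p, ∑ v : ZMod p, ∑ w : ZMod p,
      g x y z u v w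
    = ∑ y : ZMod p, ∑ z : ZMod p, ∑ u : ZMod p, ∑ v : ZMod p, ∑ x : ZMod p, ∑ w : ZMod p,
      g x y z u v w := by
  rw [Finset.sum_comm]
  apply Finset.sum_congr rfl; intro y _
  rw [Finset.sum_comm]
  apply Finset.sum_congr rfl; intro z _
  rw [Finset.sum_comm]
  apply Finset.sum_congr rfl; intro u _
  rw [Finset.sum_comm]

lemma countN3' (hmod : p % 6 = 5) :
    ∑ x : ZMod p, ∑ y : ZMod p, ∑ z : ZMod p, ∑ u : ZMod p, ∑ v : ZMod p, ∑ w : ZMod p,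
      (if (x + y + z = u + v + w ∧ x * y * z = u * v * w) then (1:ℂ) else 0)
    = (p:ℂ)^4 + 5 * p * ((p:ℂ) - 1)^2 := by
  rw [reorder6 (fun x y z u v w => if (x + y + z = u + v + w ∧ x * y * z = u * v * w) then (1:ℂ) else 0)]
  exact countN3

lemma countN2 (hmod : p % 6 = 5) :
    ∑ x : ZMod p, ∑ y : ZMod p, ∑ z : ZMod p, ∑ u : ZMod p, ∑ v : ZMod p, ∑ w : ZMod p,
      (if (x^3 + y^3 + z^3 = u^3 + v^3 + w^3 ∧ x + y + z = u + v + w) then (1:ℂ) else 0)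
    = (p:ℂ)^4 + 5 * p * ((p:ℂ) - 1)^2 := by
  have h2 := two_ne hmod
  have h3 := three_ne hmod
  have hpoint : ∀ x y z u v w : ZMod p,
      (x^3 + y^3 + z^3 = u^3 + v^3 + w^3 ∧ x + y + z = u + v + w)
      = ((y+z) + (z+x) + (x+y) = (v+w) + (w+u) + (u+v) ∧ (y+z) * (z+x) * (x+y) = (v+w) * (w+u) * (u+v)) := by
    intro x y z u v w
    apply propext
    constructor
    · rintro ⟨hc, hs⟩
      refine ⟨by linear_combination 2 * hs, ?_⟩
      apply mul_left_cancel₀ h3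
      linear_combination (x+y+z)*(x+y+z)*hs + (u+v+w)*(x+y+z)*hs + (u+v+w)*(u+v+w)*hs - hc
    · rintro ⟨hs2, hprod⟩
      have hs : x + y + z = u + v + w := by
        apply mul_left_cancel₀ h2
        linear_combination hs2
      refine ⟨?_, hs⟩
      linear_combination (x+y+z)*(x+y+z)*hs + (u+v+w)*(x+y+z)*hs + (u+v+w)*(u+v+w)*hs - 3 * hprod
  simp_rw [hpoint]
  have hstep1 : ∀ x y z : ZMod p,
      ∑ u : ZMod p, ∑ v : ZMod p, ∑ w : ZMod p,
        (if ((y+z) + (z+x) + (x+y) = (v+w) + (w+u) + (u+v) ∧ (y+z) * (z+x) * (x+y) = (v+w) * (w+u) * (u+v)) then (1:ℂ) else 0)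
      = ∑ u : ZMod p, ∑ v : ZMod p, ∑ w : ZMod p,
        (if ((y+z) + (z+x) + (x+y) = u + v + w ∧ (y+z) * (z+x) * (x+y) = u * v * w) then (1:ℂ) else 0) := by
    intro x y z
    exact reindexT h2 (fun u v w =>
      if ((y+z) + (z+x) + (x+y) = u + v + w ∧ (y+z) * (z+x) * (x+y) = u * v * w) then (1:ℂ) else 0)
  have hmid : ∑ x : ZMod p, ∑ y : ZMod p, ∑ z : ZMod p, ∑ u : ZMod p, ∑ v : ZMod p, ∑ w : ZMod p,
      (if ((y+z) + (z+x) + (x+y) = (v+w) + (w+u) + (u+v) ∧ (y+z) * (z+x) * (x+y) = (v+w) * (w+u) * (u+v)) then (1:ℂ) else 0)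
      = ∑ x : ZMod p, ∑ y : ZMod p, ∑ z : ZMod p, ∑ u : ZMod p, ∑ v : ZMod p, ∑ w : ZMod p,
      (if ((y+z) + (z+x) + (x+y) = u + v + w ∧ (y+z) * (z+x) * (x+y) = u * v * w) then (1:ℂ) else 0) := by
    apply Finset.sum_congr rfl; intro x _
    apply Finset.sum_congr rfl; intro y _
    apply Finset.sum_congr rfl; intro z _
    exact hstep1 x y z
  rw [hmid]
  rw [reindexT h2 (fun a b c => ∑ u : ZMod p, ∑ v : ZMod p, ∑ w : ZMod p,
      (if (a + b + c = u + v + w ∧ a * b * c = u * v * w) then (1:ℂ) else 0))]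
  exact countN3' hmod

lemma countN1 (hmod : p % 6 = 5) :
    ∑ x : ZMod p, ∑ y : ZMod p, ∑ z : ZMod p, ∑ u : ZMod p, ∑ v : ZMod p, ∑ w : ZMod p,
      (if (x^3 + y^3 + z^3 = u^3 + v^3 + w^3) then (1:ℂ) else 0)
    = (p:ℂ)^5 := by
  have hw : ∀ x y z u v : ZMod p,
      ∑ w : ZMod p, (if (x^3 + y^3 + z^3 = u^3 + v^3 + w^3) then (1:ℂ) else 0) = 1 := by
    intro x y z u v
    have h : ∀ w : ZMod p, (x^3 + y^3 + z^3 = u^3 + v^3 + w^3)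
        = (w^3 = x^3 + y^3 + z^3 - u^3 - v^3) := by
      intro w; apply propext
      constructor
      · intro h1; linear_combination -h1
      · intro h1; linear_combination -h1
    simp_rw [h]
    exact cube_count hmod _
  simp_rw [hw]
  simp only [Finset.sum_const, Finset.card_univ, ZMod.card, nsmul_eq_mul, mul_one]
  push_cast
  ring
noncomputable def S (nn m : ZMod p) : ℂ := ∑ x : ZMod p, eK (m * x^3 + nn * x)

lemma swap_in {A : Type*} (s : Finset A) (F : A → ZMod p → ZMod p → ZMod p → ZMod p → ZMod p → ZMod p → ℂ) :
    ∑ a ∈ s, ∑ x : ZMod p, ∑ y : ZMod p, ∑ z : ZMod p, ∑ u : ZMod p, ∑ v : ZMod p, ∑ w : ZMod p,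
      F a x y z u v w
    = ∑ x : ZMod p, ∑ y : ZMod p, ∑ z : ZMod p, ∑ u : ZMod p, ∑ v : ZMod p, ∑ w : ZMod p,
      ∑ a ∈ s, F a x y z u v w := by
  rw [Finset.sum_comm]
  apply Finset.sum_congr rfl; intro x _
  rw [Finset.sum_comm]
  apply Finset.sum_congr rfl; intro y _
  rw [Finset.sum_comm]
  apply Finset.sum_congr rfl; intro z _
  rw [Finset.sum_comm]
  apply Finset.sum_congr rfl; intro u _
  rw [Finset.sum_comm]
  apply Finset.sum_congr rfl; intro v _
  rw [Finset.sum_comm]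

lemma six_expand (g h : ZMod p → ℂ) :
    (∑ x : ZMod p, g x)^3 * (∑ x : ZMod p, h x)^3
    = ∑ x : ZMod p, ∑ y : ZMod p, ∑ z : ZMod p, ∑ u : ZMod p, ∑ v : ZMod p, ∑ w : ZMod p,
        g x * (g y * (g z * (h u * (h v * h w)))) := by
  have e1 : ∀ (f : ZMod p → ℂ), (∑ x : ZMod p, f x)^3
      = ∑ x : ZMod p, ∑ y : ZMod p, ∑ z : ZMod p, f x * (f y * f z) := by
    intro f
    rw [show (∑ x : ZMod p, f x)^3 = (∑ x : ZMod p, f x) * ((∑ x : ZMod p, f x) * (∑ x : ZMod p, f x)) by ring]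
    rw [Finset.sum_mul_sum]
    rw [Finset.mul_sum]
    apply Finset.sum_congr rfl; intro x _
    rw [Finset.mul_sum]
    apply Finset.sum_congr rfl; intro y _
    rw [Finset.sum_mul]
    apply Finset.sum_congr rfl; intro z _
    ring
  rw [e1 g, e1 h]
  rw [Finset.sum_mul]
  apply Finset.sum_congr rfl; intro x _
  rw [Finset.sum_mul]
  apply Finset.sum_congr rfl; intro y _
  rw [Finset.sum_mul]
  apply Finset.sum_congr rfl; intro z _
  rw [Finset.mul_sum]
  apply Finset.sum_congr rfl; intro u _
  rw [Finset.mul_sum]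
  apply Finset.sum_congr rfl; intro v _
  rw [Finset.mul_sum]
  apply Finset.sum_congr rfl; intro w _
  ring

lemma sum_erase_eK (c : ZMod p) :
    ∑ m ∈ Finset.univ.erase (0 : ZMod p), eK (c * m)
      = (if c = 0 then (p:ℂ) else 0) - 1 := by
  have h := Finset.sum_erase_add Finset.univ (fun m : ZMod p => eK (c * m)) (Finset.mem_univ 0)
  have h0 : eK (c * (0 : ZMod p)) = 1 := by rw [mul_zero, eK_zero]
  rw [← sum_eK_mul c]
  linear_combination h - h0

lemma T_scale (hmod : p % 6 = 5) (nn : ZMod p) {t : ZMod p} (ht : t ≠ 0) :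
    ∑ x : ZMod p, ∑ y : ZMod p, ∑ z : ZMod p, ∑ u : ZMod p, ∑ v : ZMod p, ∑ w : ZMod p,
      (if (x^3 + y^3 + z^3 = u^3 + v^3 + w^3) then eK ((nn * (x+y+z-u-v-w)) * t) else 0)
    = ∑ x : ZMod p, ∑ y : ZMod p, ∑ z : ZMod p, ∑ u : ZMod p, ∑ v : ZMod p, ∑ w : ZMod p,
      (if (x^3 + y^3 + z^3 = u^3 + v^3 + w^3) then eK (nn * (x+y+z-u-v-w)) else 0) := by
  have hb := mulLeft_bijective₀ t ht
  have ht3 : t^3 ≠ 0 := pow_ne_zero 3 ht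
  have L1 : ∀ (f : ZMod p → ℂ), ∑ x : ZMod p, f x = ∑ x : ZMod p, f (t * x) :=
    fun f => (hb.sum_comp f).symm
  conv_rhs =>
    rw [L1 (fun x => ∑ y : ZMod p, ∑ z : ZMod p, ∑ u : ZMod p, ∑ v : ZMod p, ∑ w : ZMod p,
      (if (x^3 + y^3 + z^3 = u^3 + v^3 + w^3) then eK (nn * (x+y+z-u-v-w)) else 0))]
  apply Finset.sum_congr rfl; intro x _
  conv_rhs =>
    rw [L1 (fun y => ∑ z : ZMod p, ∑ u : ZMod p, ∑ v : ZMod p, ∑ w : ZMod p,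
      (if ((t*x)^3 + y^3 + z^3 = u^3 + v^3 + w^3) then eK (nn * ((t*x)+y+z-u-v-w)) else 0))]
  apply Finset.sum_congr rfl; intro y _
  conv_rhs =>
    rw [L1 (fun z => ∑ u : ZMod p, ∑ v : ZMod p, ∑ w : ZMod p,
      (if ((t*x)^3 + (t*y)^3 + z^3 = u^3 + v^3 + w^3) then eK (nn * ((t*x)+(t*y)+z-u-v-w)) else 0))]
  apply Finset.sum_congr rfl; intro z _
  conv_rhs =>
    rw [L1 (fun u => ∑ v : ZMod p, ∑ w : ZMod p,
      (if ((t*x)^3 + (t*y)^3 + (t*z)^3 = u^3 + v^3 + w^3) then eK (nn * ((t*x)+(t*y)+(t*z)-u-v-w)) else 0))]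
  apply Finset.sum_congr rfl; intro u _
  conv_rhs =>
    rw [L1 (fun v => ∑ w : ZMod p,
      (if ((t*x)^3 + (t*y)^3 + (t*z)^3 = (t*u)^3 + v^3 + w^3) then eK (nn * ((t*x)+(t*y)+(t*z)-(t*u)-v-w)) else 0))]
  apply Finset.sum_congr rfl; intro v _
  conv_rhs =>
    rw [L1 (fun w =>
      (if ((t*x)^3 + (t*y)^3 + (t*z)^3 = (t*u)^3 + (t*v)^3 + w^3) then eK (nn * ((t*x)+(t*y)+(t*z)-(t*u)-(t*v)-w)) else 0))]
  apply Finset.sum_congr rfl; intro w _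
  apply if_congr
  · constructor
    · intro hc
      linear_combination t^3 * hc
    · intro hc
      apply mul_left_cancel₀ ht3
      linear_combination hc
  · congr 1
    ring
  · rfl

lemma T_eval (hmod : p % 6 = 5) (nn : ZMod p) (hnn : nn ≠ 0) :
    ((p:ℂ) - 1) * (∑ x : ZMod p, ∑ y : ZMod p, ∑ z : ZMod p, ∑ u : ZMod p, ∑ v : ZMod p, ∑ w : ZMod p,
      (if (x^3 + y^3 + z^3 = u^3 + v^3 + w^3) then eK (nn * (x+y+z-u-v-w)) else 0))
    = 5 * (p:ℂ)^2 * ((p:ℂ) - 1)^2 := by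
  have hcard : (Finset.univ.erase (0 : ZMod p)).card = p - 1 := by
    rw [Finset.card_erase_of_mem (Finset.mem_univ 0), Finset.card_univ, ZMod.card]
  have hp2 : 2 ≤ p := (Fact.out (p := p.Prime)).two_le
  have h1 : ∑ t ∈ Finset.univ.erase (0 : ZMod p),
      (∑ x : ZMod p, ∑ y : ZMod p, ∑ z : ZMod p, ∑ u : ZMod p, ∑ v : ZMod p, ∑ w : ZMod p,
        (if (x^3 + y^3 + z^3 = u^3 + v^3 + w^3) then eK (nn * (x+y+z-u-v-w)) else 0))
      = ((p:ℂ) - 1) * (∑ x : ZMod p, ∑ y : ZMod p, ∑ z : ZMod p, ∑ u : ZMod p, ∑ v : ZMod p, ∑ w : ZMod p,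
        (if (x^3 + y^3 + z^3 = u^3 + v^3 + w^3) then eK (nn * (x+y+z-u-v-w)) else 0)) := by
    rw [Finset.sum_const, hcard, nsmul_eq_mul]
    congr 1
    push_cast [Nat.cast_sub (by omega : 1 ≤ p)]
    ring
  rw [← h1]
  have h2 : ∀ t ∈ Finset.univ.erase (0 : ZMod p),
      (∑ x : ZMod p, ∑ y : ZMod p, ∑ z : ZMod p, ∑ u : ZMod p, ∑ v : ZMod p, ∑ w : ZMod p,
        (if (x^3 + y^3 + z^3 = u^3 + v^3 + w^3) then eK (nn * (x+y+z-u-v-w)) else 0))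
      = (∑ x : ZMod p, ∑ y : ZMod p, ∑ z : ZMod p, ∑ u : ZMod p, ∑ v : ZMod p, ∑ w : ZMod p,
        (if (x^3 + y^3 + z^3 = u^3 + v^3 + w^3) then eK ((nn * (x+y+z-u-v-w)) * t) else 0)) := by
    intro t hht
    exact (T_scale hmod nn (Finset.mem_erase.mp hht).1).symm
  rw [Finset.sum_congr rfl h2, swap_in]
  have h3 : ∀ x y z u v w : ZMod p,
      ∑ t ∈ Finset.univ.erase (0 : ZMod p),
        (if (x^3 + y^3 + z^3 = u^3 + v^3 + w^3) then eK ((nn * (x+y+z-u-v-w)) * t) else 0)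
      = (p:ℂ) * (if (x^3 + y^3 + z^3 = u^3 + v^3 + w^3 ∧ x + y + z = u + v + w) then (1:ℂ) else 0)
        - (if (x^3 + y^3 + z^3 = u^3 + v^3 + w^3) then (1:ℂ) else 0) := by
    intro x y z u v w
    by_cases hC : x^3 + y^3 + z^3 = u^3 + v^3 + w^3
    · simp only [hC, eq_self_iff_true, if_true, true_and]
      rw [sum_erase_eK (nn * (x+y+z-u-v-w))]
      have hiff : (nn * (x+y+z-u-v-w) = 0) = (x + y + z = u + v + w) := by
        apply propext
        constructor
        · intro h
          rcases mul_eq_zero.mp h with h' | h'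
          · exact absurd h' hnn
          · linear_combination h'
        · intro h
          rw [show x+y+z-u-v-w = 0 by linear_combination h, mul_zero]
      simp only [hiff]
      by_cases hL : x + y + z = u + v + w
      · simp [hL]
      · simp [hL]
    · simp [hC]
  rw [Finset.sum_congr rfl (fun x _ => Finset.sum_congr rfl (fun y _ => Finset.sum_congr rfl
    (fun z _ => Finset.sum_congr rfl (fun u _ => Finset.sum_congr rfl (fun v _ =>
      Finset.sum_congr rfl (fun w _ => h3 x y z u v w))))))]
  simp only [Finset.sum_sub_distrib, ← Finset.mul_sum]
  rw [countN2 hmod, countN1 hmod]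
  ring


lemma Zzero (nn : ZMod p) (hnn : nn ≠ 0) :
    ∑ x : ZMod p, ∑ y : ZMod p, ∑ z : ZMod p, ∑ u : ZMod p, ∑ v : ZMod p, ∑ w : ZMod p,
      eK (nn * (x+y+z-u-v-w)) = 0 := by
  have hpt : ∀ x y z u v w : ZMod p, eK (nn * (x+y+z-u-v-w))
      = eK (nn*x) * (eK (nn*y) * (eK (nn*z) * (eK (-(nn*u)) * (eK (-(nn*v)) * eK (-(nn*w)))))) := by
    intro x y z u v w
    simp only [← eK_add]
    congr 1
    ring
  simp_rw [hpt]
  rw [← six_expand (fun x => eK (nn*x)) (fun x => eK (-(nn*x)))]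
  have h1 : ∑ x : ZMod p, eK (nn*x) = 0 := by
    rw [sum_eK_mul nn, if_neg hnn]
  rw [h1]
  simp

lemma master (hmod : p % 6 = 5) (nn : ZMod p) (hnn : nn ≠ 0) :
    ∑ m ∈ Finset.univ.erase (0 : ZMod p), (S nn m)^3 * ((starRingEnd ℂ) (S nn m))^3
    = 5 * (p:ℂ)^3 * ((p:ℂ) - 1) := by
  have hp2 : 2 ≤ p := (Fact.out (p := p.Prime)).two_le
  have conjS : ∀ m : ZMod p, (starRingEnd ℂ) (S nn m) = ∑ x : ZMod p, eK (-(m * x^3 + nn * x)) := by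
    intro m
    rw [S, map_sum]
    exact Finset.sum_congr rfl fun x _ => eK_conj _
  have hexp : ∀ m : ZMod p, (S nn m)^3 * ((starRingEnd ℂ) (S nn m))^3
      = ∑ x : ZMod p, ∑ y : ZMod p, ∑ z : ZMod p, ∑ u : ZMod p, ∑ v : ZMod p, ∑ w : ZMod p,
          eK ((x^3+y^3+z^3-u^3-v^3-w^3) * m + nn * (x+y+z-u-v-w)) := by
    intro m
    rw [conjS m, S, six_expand]
    refine Finset.sum_congr rfl fun x _ => Finset.sum_congr rfl fun y _ =>
      Finset.sum_congr rfl fun z _ => Finset.sum_congr rfl fun u _ =>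
      Finset.sum_congr rfl fun v _ => Finset.sum_congr rfl fun w _ => ?_
    simp only [← eK_add]
    congr 1
    ring
  rw [Finset.sum_congr rfl (fun m _ => hexp m), swap_in]
  have hinner : ∀ x y z u v w : ZMod p,
      ∑ m ∈ Finset.univ.erase (0 : ZMod p),
        eK ((x^3+y^3+z^3-u^3-v^3-w^3) * m + nn * (x+y+z-u-v-w))
      = (p:ℂ) * (if (x^3 + y^3 + z^3 = u^3 + v^3 + w^3) then eK (nn * (x+y+z-u-v-w)) else 0)
        - eK (nn * (x+y+z-u-v-w)) := by
    intro x y z u v w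
    have hsplit : ∀ m : ZMod p, eK ((x^3+y^3+z^3-u^3-v^3-w^3) * m + nn * (x+y+z-u-v-w))
        = eK ((x^3+y^3+z^3-u^3-v^3-w^3) * m) * eK (nn * (x+y+z-u-v-w)) := by
      intro m
      rw [← eK_add]
    simp_rw [hsplit]
    rw [← Finset.sum_mul, sum_erase_eK]
    have hiff : (x^3+y^3+z^3-u^3-v^3-w^3 = 0) = (x^3 + y^3 + z^3 = u^3 + v^3 + w^3) := by
      apply propext
      constructor
      · intro h; linear_combination h
      · intro h; linear_combination h
    simp only [hiff]
    by_cases hC : x^3 + y^3 + z^3 = u^3 + v^3 + w^3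
    · simp only [hC, eq_self_iff_true, if_true]; ring
    · simp only [hC, if_neg hC, if_false]; ring
  rw [Finset.sum_congr rfl (fun x _ => Finset.sum_congr rfl (fun y _ => Finset.sum_congr rfl
    (fun z _ => Finset.sum_congr rfl (fun u _ => Finset.sum_congr rfl (fun v _ =>
      Finset.sum_congr rfl (fun w _ => hinner x y z u v w))))))]
  simp only [Finset.sum_sub_distrib, ← Finset.mul_sum]
  rw [Zzero nn hnn, sub_zero]
  have hT := T_eval hmod nn hnn
  have hpne : ((p:ℂ) - 1) ≠ 0 := by
    intro h
    have : (p:ℂ) = ((1:ℕ):ℂ) := by push_cast; linear_combination h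
    have := Nat.cast_injective (R := ℂ) this
    omega
  apply mul_left_cancel₀ hpne
  rw [show ((p:ℂ)-1) * ((p:ℂ) * ∑ x : ZMod p, ∑ y : ZMod p, ∑ z : ZMod p, ∑ u : ZMod p, ∑ v : ZMod p, ∑ w : ZMod p,
      (if (x^3 + y^3 + z^3 = u^3 + v^3 + w^3) then eK (nn * (x+y+z-u-v-w)) else 0))
    = (p:ℂ) * (((p:ℂ)-1) * ∑ x : ZMod p, ∑ y : ZMod p, ∑ z : ZMod p, ∑ u : ZMod p, ∑ v : ZMod p, ∑ w : ZMod p,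
      (if (x^3 + y^3 + z^3 = u^3 + v^3 + w^3) then eK (nn * (x+y+z-u-v-w)) else 0)) by ring]
  rw [hT]
  ring



lemma abs6 (X : ℂ) : ((‖X‖ : ℝ) : ℂ)^6 = X^3 * ((starRingEnd ℂ) X)^3 := by
  have h2 : ((‖X‖ : ℝ) : ℂ)^2 = X * (starRingEnd ℂ) X := by
    rw [Complex.mul_conj, Complex.normSq_eq_norm_sq]
    push_cast
    ring
  calc ((‖X‖ : ℝ) : ℂ)^6 = (((‖X‖ : ℝ) : ℂ)^2)^3 := by ring
    _ = (X * (starRingEnd ℂ) X)^3 := by rw [h2]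
    _ = X^3 * ((starRingEnd ℂ) X)^3 := by ring

lemma msum_reindex (hmod : p % 6 = 5) (f : ZMod p → ℝ) :
    ∑ m ∈ Finset.Icc 1 (p - 1), f ((m : ℕ) : ZMod p)
      = ∑ m ∈ Finset.univ.erase (0 : ZMod p), f m := by
  have hp5 : 5 ≤ p := by omega
  apply Finset.sum_nbij' (fun m : ℕ => (m : ZMod p)) (fun x : ZMod p => x.val)
  · intro m hm
    rw [Finset.mem_Icc] at hm
    rw [Finset.mem_erase]
    refine ⟨?_, Finset.mem_univ _⟩
    intro h0
    have := (ZMod.natCast_eq_zero_iff m p).mp h0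
    have := Nat.le_of_dvd (by omega) this
    omega
  · intro x hx
    rw [Finset.mem_erase] at hx
    rw [Finset.mem_Icc]
    have h1 : x.val < p := ZMod.val_lt x
    have h2 : x.val ≠ 0 := fun h => hx.1 (by rw [← ZMod.natCast_rightInverse x, h]; simp)
    omega
  · intro m hm
    rw [Finset.mem_Icc] at hm
    exact ZMod.val_natCast_of_lt (by omega)
  · intro x _
    exact ZMod.natCast_rightInverse x
  · intro m _
    rfl

end Stmt9Aux

open Stmt9Aux in
theorem stmt9 (p : ℕ) (hp : p.Prime) (n : ℤ) (hn : ¬ (p : ℤ) ∣ n) (hmod : p % 6 = 5) :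
    ∑ m ∈ Finset.Icc 1 (p - 1),
      ‖∑ a ∈ Finset.range p, Complex.exp (2 * Real.pi * Complex.I * ((m : ℂ) * (a : ℂ) ^ 3 + (n : ℂ) * (a : ℂ)) / p)‖ ^ 6
    = 5 * (p : ℝ) ^ 3 * ((p : ℝ) - 1) := by
  haveI : Fact p.Prime := ⟨hp⟩
  haveI : NeZero p := ⟨by have := hp.two_le; omega⟩
  set nn : ZMod p := (n : ZMod p) with hnndef
  have hnn : nn ≠ 0 := by
    rw [hnndef, Ne, ZMod.intCast_zmod_eq_zero_iff_dvd]
    exact hn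
  have hinner : ∀ m : ℕ,
      (∑ a ∈ Finset.range p, Complex.exp (2 * Real.pi * Complex.I * ((m : ℂ) * (a : ℂ) ^ 3 + (n : ℂ) * (a : ℂ)) / p))
      = S nn ((m : ℕ) : ZMod p) := by
    intro m
    rw [S, ← sum_range_cast (fun x => eK (((m : ℕ) : ZMod p) * x^3 + nn * x))]
    apply Finset.sum_congr rfl
    intro a _
    have h1 : ((((m:ℤ) * (a:ℤ)^3 + n * (a:ℤ)) : ℤ) : ZMod p)
        = ((m : ℕ) : ZMod p) * ((a : ℕ) : ZMod p)^3 + nn * ((a : ℕ) : ZMod p) := by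
      push_cast
      ring
    rw [← h1, eK_int, E]
    congr 1
    push_cast
    ring
  have hcast : ∀ m : ℕ, ((((‖S nn ((m : ℕ) : ZMod p)‖)^6 : ℝ)) : ℂ)
      = (S nn ((m:ℕ) : ZMod p))^3 * ((starRingEnd ℂ) (S nn ((m:ℕ) : ZMod p)))^3 := by
    intro m
    push_cast
    exact abs6 _
  apply Complex.ofReal_injective
  push_cast
  calc ∑ m ∈ Finset.Icc 1 (p - 1),
        ((‖∑ a ∈ Finset.range p, Complex.exp (2 * Real.pi * Complex.I * ((m : ℂ) * (a : ℂ) ^ 3 + (n : ℂ) * (a : ℂ)) / p)‖ : ℝ) : ℂ) ^ 6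
      = ∑ m ∈ Finset.Icc 1 (p - 1),
        (S nn ((m:ℕ) : ZMod p))^3 * ((starRingEnd ℂ) (S nn ((m:ℕ) : ZMod p)))^3 := by
        apply Finset.sum_congr rfl
        intro m _
        rw [hinner m]
        have := hcast m
        push_cast at this
        exact this
    _ = ∑ m ∈ Finset.univ.erase (0 : ZMod p), (S nn m)^3 * ((starRingEnd ℂ) (S nn m))^3 := by
        have hre : ∀ m : ℕ, (S nn ((m:ℕ) : ZMod p))^3 * ((starRingEnd ℂ) (S nn ((m:ℕ) : ZMod p)))^3
            = (((‖S nn ((m:ℕ) : ZMod p)‖)^6 : ℝ) : ℂ) := fun m => (hcast m).symm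
        calc ∑ m ∈ Finset.Icc 1 (p - 1), (S nn ((m:ℕ) : ZMod p))^3 * ((starRingEnd ℂ) (S nn ((m:ℕ) : ZMod p)))^3
            = ((∑ m ∈ Finset.Icc 1 (p - 1), ((‖S nn ((m:ℕ) : ZMod p)‖)^6 : ℝ) : ℝ) : ℂ) := by
              rw [Complex.ofReal_sum]
              exact Finset.sum_congr rfl fun m _ => hre m
          _ = ((∑ m ∈ Finset.univ.erase (0 : ZMod p), ((‖S nn m‖)^6 : ℝ) : ℝ) : ℂ) := by
              rw [msum_reindex hmod (fun m => ((‖S nn m‖)^6 : ℝ))]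
          _ = ∑ m ∈ Finset.univ.erase (0 : ZMod p), (S nn m)^3 * ((starRingEnd ℂ) (S nn m))^3 := by
              rw [Complex.ofReal_sum]
              apply Finset.sum_congr rfl
              intro m _
              push_cast
              exact abs6 _
    _ = 5 * (p:ℂ)^3 * ((p:ℂ) - 1) := master hmod nn hnn
end

section
/- For any odd prime p, the two polynomials f(x) = x³ + x² + x (twisted by (−1/p)) and g(x) = (x²+1)(x²+4x+1) satisfy ∑_{x=1}^{p-1} ((−1/p)·(f(x)/p)) − ∑_{x=1}^{p-1} ((g(x)/p)) = 2; in particular, the difference of these two character sums is independent of p. -/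
open Finset Complex Real

namespace Stmt16Aux
open Finset

variable {p : ℕ} [hp : Fact p.Prime]

private lemma char_ne_two (hodd : Odd p) : ringChar (ZMod p) ≠ 2 := by
  rw [ZMod.ringChar_zmod_n]; rintro rfl
  exact (Nat.not_odd_iff_even.mpr even_two) hodd

private lemma two_ne_zero'' (hodd : Odd p) : (2 : ZMod p) ≠ 0 :=
  fun h => char_ne_two hodd (by
    have : ((2 : ℕ) : ZMod p) = 0 := by exact_mod_cast h
    rw [ZMod.natCast_eq_zero_iff] at this
    rw [ZMod.ringChar_zmod_n]
    exact ((Nat.prime_dvd_prime_iff_eq hp.out Nat.prime_two).mp this))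

private lemma sqrt_card (hodd : Odd p) (a : ZMod p) :
    (((univ : Finset (ZMod p)).filter fun x => x ^ 2 = a).card : ℤ)
      = quadraticChar (ZMod p) a + 1 := by
  rw [← quadraticChar_card_sqrts (char_ne_two hodd) a]
  congr 1
  simp [Set.toFinset_setOf]

private lemma fiber_card (hodd : Odd p) {b : ZMod p} (hb : b ≠ 0) (s : ZMod p) :
    ((((univ : Finset (ZMod p)).erase 0).filter fun x => x + b * x⁻¹ = s).card : ℤ)
      = quadraticChar (ZMod p) (s ^ 2 - 4 * b) + 1 := by
  have h2 : (2 : ZMod p) ≠ 0 := two_ne_zero'' hodd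
  rw [← sqrt_card hodd (s ^ 2 - 4 * b)]
  congr 1
  apply Finset.card_nbij' (fun x => 2 * x - s) (fun y => (y + s) / 2)
  · intro x hx
    simp only [mem_coe, mem_filter, mem_erase, mem_univ, and_true, true_and] at hx ⊢
    obtain ⟨hx0, hxs⟩ := hx
    have hxx : x * x + b = s * x := by
      have h := hxs
      field_simp at h
      linear_combination h
    linear_combination (4 : ZMod p) * hxx
  · intro y hy
    simp only [mem_coe, mem_filter, mem_erase, mem_univ, and_true, true_and] at hy ⊢
    have key : ((y + s) / 2) * (s - (y + s) / 2) = b := by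
      field_simp
      linear_combination -hy
    have hx0 : (y + s) / 2 ≠ 0 := by
      intro h; rw [h, zero_mul] at key; exact hb key.symm
    refine ⟨hx0, ?_⟩
    have hb' : b * ((y + s) / 2)⁻¹ = s - (y + s) / 2 := by
      rw [← key, mul_comm ((y + s) / 2) _, mul_assoc, mul_inv_cancel₀ hx0, mul_one]
    rw [hb']; ring
  · intro x _; field_simp; ring
  · intro y _; field_simp; ring

private lemma fiber_sum (s : Finset (ZMod p)) (ψ : ZMod p → ZMod p) (F : ZMod p → ℤ) :
    ∑ x ∈ s, F (ψ x) = ∑ t : ZMod p, ((s.filter fun x => ψ x = t).card : ℤ) * F t := by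
  rw [← Finset.sum_fiberwise_of_maps_to' (fun x _ => mem_univ (ψ x)) F]
  exact (sum_congr rfl fun t _ => by rw [sum_const, nsmul_eq_mul]).symm

private lemma sum_shift (F : ZMod p → ℤ) (c : ZMod p) :
    ∑ x : ZMod p, F (x + c) = ∑ x : ZMod p, F x :=
  Fintype.sum_equiv (Equiv.addRight c) _ _ (fun _ => rfl)

private lemma sum_neg (F : ZMod p → ℤ) :
    ∑ x : ZMod p, F (-x) = ∑ x : ZMod p, F x :=
  Fintype.sum_equiv (Equiv.neg _) _ _ (fun _ => rfl)

private lemma sum_chi_shift (hodd : Odd p) (c : ZMod p) :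
    ∑ x : ZMod p, (quadraticChar (ZMod p) (x + c) : ℤ) = 0 := by
  rw [sum_shift (fun x => (quadraticChar (ZMod p) x : ℤ)) c]
  exact_mod_cast quadraticChar_sum_zero (char_ne_two hodd)


private lemma sum_erase_one (hodd : Odd p) :
    ∑ v ∈ (univ : Finset (ZMod p)).erase 1, (quadraticChar (ZMod p) v : ℤ) = -1 := by
  have h := Finset.sum_erase_add univ (fun v => (quadraticChar (ZMod p) v : ℤ))
    (mem_univ (1 : ZMod p))
  have hz : ∑ v : ZMod p, (quadraticChar (ZMod p) v : ℤ) = 0 :=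
    quadraticChar_sum_zero (char_ne_two hodd)
  simp only [map_one] at h
  omega

private lemma sum_chi_mul_shift (hodd : Odd p) {d : ZMod p} (hd : d ≠ 0) :
    ∑ u : ZMod p, (quadraticChar (ZMod p) (u * (u - d)) : ℤ) = -1 := by
  have h := Finset.sum_erase_add univ
    (fun u => (quadraticChar (ZMod p) (u * (u - d)) : ℤ)) (mem_univ (0 : ZMod p))
  simp only [zero_mul, quadraticChar_zero] at h
  rw [← h, add_zero]
  have step : ∑ u ∈ (univ : Finset (ZMod p)).erase 0,
      (quadraticChar (ZMod p) (u * (u - d)) : ℤ)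
      = ∑ v ∈ (univ : Finset (ZMod p)).erase 1, (quadraticChar (ZMod p) v : ℤ) := by
    apply Finset.sum_nbij' (fun u => 1 - d * u⁻¹) (fun v => d * (1 - v)⁻¹)
    · intro u hu
      have hu0 : u ≠ 0 := (mem_erase.mp hu).1
      simp only [mem_erase, mem_univ, and_true]
      intro h1
      have : d * u⁻¹ = 0 := by linear_combination -h1
      rcases mul_eq_zero.mp this with h | h
      · exact hd h
      · exact hu0 (inv_eq_zero.mp h)
    · intro v hv
      have hv1 : v ≠ 1 := (mem_erase.mp hv).1
      have : (1 : ZMod p) - v ≠ 0 := fun h => hv1 (by linear_combination -h)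
      simp only [mem_erase, mem_univ, and_true]
      exact mul_ne_zero hd (inv_ne_zero this)
    · intro u hu
      have hu0 : u ≠ 0 := (mem_erase.mp hu).1
      have hdu : d * u⁻¹ ≠ 0 := mul_ne_zero hd (inv_ne_zero hu0)
      have h1 : (1 : ZMod p) - (1 - d * u⁻¹) = d * u⁻¹ := by ring
      rw [h1, mul_inv, inv_inv, show d * (d⁻¹ * u) = (d * d⁻¹) * u by ring,
        mul_inv_cancel₀ hd, one_mul]
    · intro v hv
      have hv1 : v ≠ 1 := (mem_erase.mp hv).1
      have h1v : (1 : ZMod p) - v ≠ 0 := fun h => hv1 (by linear_combination -h)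
      have hrw : (d * (1 - v)⁻¹)⁻¹ = d⁻¹ * (1 - v) := by rw [mul_inv, inv_inv]
      rw [hrw, show d * (d⁻¹ * (1 - v)) = (d * d⁻¹) * (1 - v) by ring,
        mul_inv_cancel₀ hd, one_mul]
      ring
    · intro u hu
      have hu0 : u ≠ 0 := (mem_erase.mp hu).1
      have harg : u * (u - d) = u ^ 2 * (1 - d * u⁻¹) := by field_simp
      rw [harg, map_mul, quadraticChar_sq_one' hu0, one_mul]
  rw [step]
  exact sum_erase_one hodd


private lemma quad_pair (hodd : Odd p) {r1 r2 : ZMod p} (h : r1 ≠ r2) :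
    ∑ x : ZMod p, (quadraticChar (ZMod p) ((x - r1) * (x - r2)) : ℤ) = -1 := by
  have key := sum_shift (fun x => (quadraticChar (ZMod p) ((x - r1) * (x - r2)) : ℤ)) r1
  rw [← key]
  have : ∀ x : ZMod p, (quadraticChar (ZMod p) ((x + r1 - r1) * (x + r1 - r2)) : ℤ)
      = quadraticChar (ZMod p) (x * (x - (r2 - r1))) := by
    intro x; congr 1; ring
  rw [Finset.sum_congr rfl fun x _ => this x]
  exact sum_chi_mul_shift hodd (sub_ne_zero.mpr (Ne.symm h))

private lemma iso (hodd : Odd p) (a : ZMod p) {b : ZMod p} (hb : b ≠ 0) :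
    ∑ x : ZMod p, (quadraticChar (ZMod p) (x * (x ^ 2 + a * x + b)) : ℤ)
      = ∑ x : ZMod p, (quadraticChar (ZMod p) (x * (x ^ 2 - 2 * a * x + (a ^ 2 - 4 * b))) : ℤ) := by
  have h2 : (2 : ZMod p) ≠ 0 := two_ne_zero'' hodd
  have h0 := Finset.sum_erase_add univ
    (fun x => (quadraticChar (ZMod p) (x * (x ^ 2 + a * x + b)) : ℤ)) (mem_univ (0 : ZMod p))
  simp only [zero_mul, quadraticChar_zero] at h0
  rw [← h0, add_zero]
  have step1 : ∑ x ∈ (univ : Finset (ZMod p)).erase 0,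
      (quadraticChar (ZMod p) (x * (x ^ 2 + a * x + b)) : ℤ)
      = ∑ x ∈ (univ : Finset (ZMod p)).erase 0,
        (fun s => (quadraticChar (ZMod p) (s + a) : ℤ)) (x + b * x⁻¹) := by
    refine Finset.sum_congr rfl fun x hx => ?_
    have hx0 : x ≠ 0 := (mem_erase.mp hx).1
    have harg : x * (x ^ 2 + a * x + b) = x ^ 2 * ((x + b * x⁻¹) + a) := by
      field_simp; ring
    rw [harg, map_mul, quadraticChar_sq_one' hx0, one_mul]
  rw [step1, fiber_sum ((univ : Finset (ZMod p)).erase 0) (fun x => x + b * x⁻¹)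
    (fun s => (quadraticChar (ZMod p) (s + a) : ℤ))]
  have step2 : ∀ t : ZMod p,
      (((((univ : Finset (ZMod p)).erase 0).filter fun x => x + b * x⁻¹ = t).card : ℤ))
        * (quadraticChar (ZMod p) (t + a) : ℤ)
      = (quadraticChar (ZMod p) ((t ^ 2 - 4 * b) * (t + a)) : ℤ)
        + quadraticChar (ZMod p) (t + a) := by
    intro t
    rw [fiber_card hodd hb t, map_mul]
    ring
  rw [Finset.sum_congr rfl fun t _ => step2 t, Finset.sum_add_distrib,
    sum_chi_shift hodd a, add_zero]
  have key := sum_shift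
    (fun t => (quadraticChar (ZMod p) ((t ^ 2 - 4 * b) * (t + a)) : ℤ)) (-a)
  rw [← key]
  refine Finset.sum_congr rfl fun x _ => ?_
  congr 1
  ring


private lemma four_ne_zero' (hodd : Odd p) : (4 : ZMod p) ≠ 0 := by
  have h2 : (2 : ZMod p) ≠ 0 := two_ne_zero'' hodd
  have : (4 : ZMod p) = 2 * 2 := by norm_num
  rw [this]; exact mul_ne_zero h2 h2

private lemma T1_eq (hodd : Odd p) :
    ∑ x : ZMod p, (quadraticChar (ZMod p) (x ^ 3 + x ^ 2 + x) : ℤ)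
      = ∑ x : ZMod p, (quadraticChar (ZMod p) (x * (x ^ 2 + 10 * x + 9)) : ℤ) := by
  calc
    ∑ x : ZMod p, (quadraticChar (ZMod p) (x ^ 3 + x ^ 2 + x) : ℤ)
        = ∑ x : ZMod p, (quadraticChar (ZMod p) (x * (x ^ 2 + 1 * x + 1)) : ℤ) := by
          refine Finset.sum_congr rfl fun x _ => ?_; congr 1; ring
    _ = ∑ x : ZMod p,
          (quadraticChar (ZMod p) (x * (x ^ 2 - 2 * 1 * x + (1 ^ 2 - 4 * 1))) : ℤ) :=
        iso hodd 1 one_ne_zero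
    _ = ∑ x : ZMod p, (quadraticChar (ZMod p) (x * (x ^ 2 + (-5) * x + 4)) : ℤ) := by
          rw [← sum_shift
            (fun x => (quadraticChar (ZMod p) (x * (x ^ 2 - 2 * 1 * x + (1 ^ 2 - 4 * 1))) : ℤ))
            (-1)]
          refine Finset.sum_congr rfl fun x _ => ?_; congr 1; ring
    _ = ∑ x : ZMod p,
          (quadraticChar (ZMod p)
            (x * (x ^ 2 - 2 * (-5) * x + ((-5) ^ 2 - 4 * 4))) : ℤ) :=
        iso hodd (-5) (four_ne_zero' hodd)
    _ = ∑ x : ZMod p, (quadraticChar (ZMod p) (x * (x ^ 2 + 10 * x + 9)) : ℤ) := by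
          refine Finset.sum_congr rfl fun x _ => ?_; congr 1; ring


private lemma eight_ne_zero' (hodd : Odd p) : (8 : ZMod p) ≠ 0 := by
  have h2 : (2 : ZMod p) ≠ 0 := two_ne_zero'' hodd
  have : (8 : ZMod p) = 2 * (2 * 2) := by norm_num
  rw [this]; exact mul_ne_zero h2 (mul_ne_zero h2 h2)

private lemma T2_eq (hodd : Odd p) :
    ∑ x : ZMod p, (quadraticChar (ZMod p) ((x ^ 2 + 1) * (x ^ 2 + 4 * x + 1)) : ℤ)
      = quadraticChar (ZMod p) (-1)
          * (∑ x : ZMod p, (quadraticChar (ZMod p) (x * (x ^ 2 + 10 * x + 9)) : ℤ)) - 1 := by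
  have h2 : (2 : ZMod p) ≠ 0 := two_ne_zero'' hodd
  have h0 := Finset.sum_erase_add univ
    (fun x => (quadraticChar (ZMod p) ((x ^ 2 + 1) * (x ^ 2 + 4 * x + 1)) : ℤ))
    (mem_univ (0 : ZMod p))
  have e0 : (((0 : ZMod p) ^ 2 + 1) * ((0 : ZMod p) ^ 2 + 4 * 0 + 1)) = 1 := by norm_num
  simp only [e0, map_one] at h0
  rw [← h0]
  have step1 : ∑ x ∈ (univ : Finset (ZMod p)).erase 0,
      (quadraticChar (ZMod p) ((x ^ 2 + 1) * (x ^ 2 + 4 * x + 1)) : ℤ)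
      = ∑ x ∈ (univ : Finset (ZMod p)).erase 0,
        (fun t => (quadraticChar (ZMod p) (t * (t + 4)) : ℤ)) (x + 1 * x⁻¹) := by
    refine Finset.sum_congr rfl fun x hx => ?_
    have hx0 : x ≠ 0 := (mem_erase.mp hx).1
    have harg : (x ^ 2 + 1) * (x ^ 2 + 4 * x + 1)
        = x ^ 2 * ((x + 1 * x⁻¹) * ((x + 1 * x⁻¹) + 4)) := by
      field_simp; ring
    rw [harg, map_mul, quadraticChar_sq_one' hx0, one_mul]
  rw [step1, fiber_sum ((univ : Finset (ZMod p)).erase 0) (fun x => x + 1 * x⁻¹)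
    (fun t => (quadraticChar (ZMod p) (t * (t + 4)) : ℤ))]
  have step2 : ∀ t : ZMod p,
      (((((univ : Finset (ZMod p)).erase 0).filter fun x => x + 1 * x⁻¹ = t).card : ℤ))
        * (quadraticChar (ZMod p) (t * (t + 4)) : ℤ)
      = (quadraticChar (ZMod p) (t ^ 2 - 4 * 1) : ℤ)
          * quadraticChar (ZMod p) (t * (t + 4))
        + quadraticChar (ZMod p) (t * (t + 4)) := by
    intro t
    rw [fiber_card hodd one_ne_zero t]
    ring
  rw [Finset.sum_congr rfl fun t _ => step2 t, Finset.sum_add_distrib]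
  -- second summand: ∑ χ(t(t+4)) = -1
  have hsecond : ∑ t : ZMod p, (quadraticChar (ZMod p) (t * (t + 4)) : ℤ) = -1 := by
    have h04 : (0 : ZMod p) ≠ -4 := by
      intro h
      exact four_ne_zero' hodd (by linear_combination h)
    rw [show (∑ t : ZMod p, (quadraticChar (ZMod p) (t * (t + 4)) : ℤ))
        = ∑ t : ZMod p, (quadraticChar (ZMod p) ((t - 0) * (t - (-4))) : ℤ) from
      Finset.sum_congr rfl fun t _ => by congr 1; ring]
    exact quad_pair hodd h04
  rw [hsecond]
  -- first summand
  have hfirst : ∑ t : ZMod p,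
      ((quadraticChar (ZMod p) (t ^ 2 - 4 * 1) : ℤ)
          * quadraticChar (ZMod p) (t * (t + 4)))
      = quadraticChar (ZMod p) (-1)
          * (∑ x : ZMod p, (quadraticChar (ZMod p) (x * (x ^ 2 + 10 * x + 9)) : ℤ)) - 1 := by
    calc
      ∑ t : ZMod p, ((quadraticChar (ZMod p) (t ^ 2 - 4 * 1) : ℤ)
            * quadraticChar (ZMod p) (t * (t + 4)))
          = ∑ t : ZMod p,
            (fun t => (quadraticChar (ZMod p) ((t ^ 2 - 1) * (t ^ 2 - 9)) : ℤ)) (t + 1) := by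
            refine Finset.sum_congr rfl fun t _ => ?_
            rw [← map_mul]
            congr 1; ring
      _ = ∑ t : ZMod p, (quadraticChar (ZMod p) ((t ^ 2 - 1) * (t ^ 2 - 9)) : ℤ) :=
            sum_shift (fun t => (quadraticChar (ZMod p) ((t ^ 2 - 1) * (t ^ 2 - 9)) : ℤ)) 1
      _ = ∑ t : ZMod p,
            (fun u => (quadraticChar (ZMod p) ((u - 1) * (u - 9)) : ℤ)) (t ^ 2) := by
            refine Finset.sum_congr rfl fun t _ => rfl
      _ = ∑ u : ZMod p,
            (((univ : Finset (ZMod p)).filter fun x => x ^ 2 = u).card : ℤ)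
              * (quadraticChar (ZMod p) ((u - 1) * (u - 9)) : ℤ) :=
            fiber_sum univ (fun x => x ^ 2)
              (fun u => (quadraticChar (ZMod p) ((u - 1) * (u - 9)) : ℤ))
      _ = ∑ u : ZMod p,
            ((quadraticChar (ZMod p) u : ℤ) * quadraticChar (ZMod p) ((u - 1) * (u - 9))
              + quadraticChar (ZMod p) ((u - 1) * (u - 9))) := by
            refine Finset.sum_congr rfl fun u _ => ?_
            rw [sqrt_card hodd u]
            ring
      _ = (∑ u : ZMod p,
            (quadraticChar (ZMod p) u : ℤ) * quadraticChar (ZMod p) ((u - 1) * (u - 9)))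
            + ∑ u : ZMod p, (quadraticChar (ZMod p) ((u - 1) * (u - 9)) : ℤ) :=
            Finset.sum_add_distrib
      _ = quadraticChar (ZMod p) (-1)
            * (∑ x : ZMod p, (quadraticChar (ZMod p) (x * (x ^ 2 + 10 * x + 9)) : ℤ)) - 1 := by
            have h19 : (1 : ZMod p) ≠ 9 := by
              intro h
              exact eight_ne_zero' hodd (by linear_combination -h)
            have hq : ∑ u : ZMod p, (quadraticChar (ZMod p) ((u - 1) * (u - 9)) : ℤ) = -1 :=
              quad_pair hodd h19
            rw [hq]
            have hneg : ∑ u : ZMod p,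
                (quadraticChar (ZMod p) u : ℤ) * quadraticChar (ZMod p) ((u - 1) * (u - 9))
                = ∑ u : ZMod p, (quadraticChar (ZMod p) (-1) : ℤ)
                    * quadraticChar (ZMod p) (u * (u ^ 2 + 10 * u + 9)) := by
              rw [← sum_neg (fun u =>
                (quadraticChar (ZMod p) u : ℤ) * quadraticChar (ZMod p) ((u - 1) * (u - 9)))]
              refine Finset.sum_congr rfl fun u _ => ?_
              rw [← map_mul, ← map_mul]
              congr 1; ring
            rw [hneg, ← Finset.mul_sum]
            ring
  rw [hfirst]
  ring


private lemma icc_to_univ (H : ZMod p → ℤ) :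
    ∑ x ∈ Finset.Icc 1 (p - 1), H ((x : ℕ) : ZMod p)
      = (∑ y : ZMod p, H y) - H 0 := by
  have h1 : 1 ≤ p := hp.out.pos
  have hins : insert 0 (Finset.Icc 1 (p - 1)) = Finset.range p := by
    ext a; simp only [mem_insert, mem_Icc, mem_range]; omega
  have h0notin : (0 : ℕ) ∉ Finset.Icc 1 (p - 1) := by simp
  have hrange : ∑ x ∈ Finset.range p, H ((x : ℕ) : ZMod p) = ∑ y : ZMod p, H y := by
    apply Finset.sum_nbij' (fun n : ℕ => ((n : ℕ) : ZMod p)) (fun y : ZMod p => y.val)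
    · intros; exact mem_univ _
    · intro y _; exact mem_range.mpr (ZMod.val_lt y)
    · intro n hn; exact ZMod.val_cast_of_lt (mem_range.mp hn)
    · intro y _; exact ZMod.natCast_rightInverse y
    · intro n _; rfl
  have hsplit := Finset.sum_insert (f := fun x : ℕ => H ((x : ℕ) : ZMod p)) h0notin
  rw [hins] at hsplit
  rw [hrange] at hsplit
  simp only [Nat.cast_zero] at hsplit
  linarith [hsplit]

end Stmt16Aux

open Stmt16Aux in
theorem stmt16 (p : ℕ) [hp : Fact p.Prime] (hodd : Odd p) :
    (∑ x ∈ Finset.Icc 1 (p - 1),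
        (legendreSym p (-1)) * legendreSym p ((x : ℤ) ^ 3 + (x : ℤ) ^ 2 + (x : ℤ)))
      - ∑ x ∈ Finset.Icc 1 (p - 1),
        legendreSym p ((((x : ℤ) ^ 2 + 1) * ((x : ℤ) ^ 2 + 4 * (x : ℤ) + 1)))
    = 2 := by
  have hL : legendreSym p (-1) = quadraticChar (ZMod p) (-1 : ZMod p) := by
    rw [legendreSym]; norm_num
  have hsum1 : ∑ x ∈ Finset.Icc 1 (p - 1),
      (legendreSym p (-1)) * legendreSym p ((x : ℤ) ^ 3 + (x : ℤ) ^ 2 + (x : ℤ))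
      = ∑ x ∈ Finset.Icc 1 (p - 1),
        (fun y : ZMod p => (quadraticChar (ZMod p) (-1 : ZMod p) : ℤ)
          * quadraticChar (ZMod p) (y ^ 3 + y ^ 2 + y)) ((x : ℕ) : ZMod p) := by
    refine Finset.sum_congr rfl fun x _ => ?_
    rw [hL, legendreSym]
    congr 1
    push_cast
    ring
  have hsum2 : ∑ x ∈ Finset.Icc 1 (p - 1),
      legendreSym p ((((x : ℤ) ^ 2 + 1) * ((x : ℤ) ^ 2 + 4 * (x : ℤ) + 1)))
      = ∑ x ∈ Finset.Icc 1 (p - 1),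
        (fun y : ZMod p =>
          (quadraticChar (ZMod p) ((y ^ 2 + 1) * (y ^ 2 + 4 * y + 1)) : ℤ)) ((x : ℕ) : ZMod p) := by
    refine Finset.sum_congr rfl fun x _ => ?_
    rw [legendreSym]
    congr 1
    push_cast
    ring
  rw [hsum1, hsum2,
    icc_to_univ (fun y : ZMod p => (quadraticChar (ZMod p) (-1 : ZMod p) : ℤ)
      * quadraticChar (ZMod p) (y ^ 3 + y ^ 2 + y)),
    icc_to_univ (fun y : ZMod p =>
      (quadraticChar (ZMod p) ((y ^ 2 + 1) * (y ^ 2 + 4 * y + 1)) : ℤ))]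
  have hz1 : ((0 : ZMod p) ^ 3 + (0 : ZMod p) ^ 2 + (0 : ZMod p)) = 0 := by norm_num
  have hz2 : (((0 : ZMod p) ^ 2 + 1) * ((0 : ZMod p) ^ 2 + 4 * 0 + 1)) = 1 := by norm_num
  have hpull : ∑ y : ZMod p, ((quadraticChar (ZMod p) (-1 : ZMod p) : ℤ)
      * quadraticChar (ZMod p) (y ^ 3 + y ^ 2 + y))
      = (quadraticChar (ZMod p) (-1 : ZMod p) : ℤ)
        * ∑ y : ZMod p, (quadraticChar (ZMod p) (y ^ 3 + y ^ 2 + y) : ℤ) := by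
    rw [Finset.mul_sum]
  rw [hpull, T1_eq hodd, T2_eq hodd]
  simp only [hz1, hz2, quadraticChar_zero, map_one]
  ring
end
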